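/- Fix 0 < r < 1, let m, n ∈ ℕ, q ∈ [r,1), and λ ≥ 1. Let (ω_{(i,j)})_{i≥1,j≥1} be i.i.d. Geom(r) random variables and (I^q_{(i,0)})_{i≥1} be i.i.d. Geom(q) random variables independent of the bulk, and define G^q(m,n|1,0) = max_{1≤j≤m}{Σ_{i=1}^j I^q_{(i,0)} + G_{(j,1),(m,n)}}. Then log E[exp{log(λ) · G^q(m,n|1,0)}] ≤ 𝓛^{λ,q}(m,n). -/

import Mathlib

open MeasureTheory ProbabilityTheory

noncomputable section

/-- A lattice site. -/
abbrev Site := ℤ × ℤ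

def e1 : Site := (1, 0)
def e2 : Site := (0, 1)

/-- `π 0, π 1, …, π n` is an up-right path: each increment is `e₁` or `e₂`. -/
def IsUpRight (π : ℕ → Site) (n : ℕ) : Prop :=
  ∀ i < n, π (i + 1) = π i + e1 ∨ π (i + 1) = π i + e2

/-- Total weight collected by the path `π 0, …, π n`. -/
def pathWeight (ω : Site → ℝ) (π : ℕ → Site) (n : ℕ) : ℝ :=
  ∑ i ∈ Finset.range (n + 1), ω (π i)

/-- Last-passage time from `x` to `y`. -/
def lppG (ω : Site → ℝ) (x y : Site) : ℝ :=
  sSup {w : ℝ | ∃ n : ℕ, ∃ π : ℕ → Site,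
    IsUpRight π n ∧ π 0 = x ∧ π n = y ∧ w = pathWeight ω π n}

/-- The Geom(α) distribution on ℝ: mass `αⁿ(1−α)` at `n ∈ ℤ_{≥0}`. -/
def geomMeasure (α : ℝ) : Measure ℝ :=
  Measure.sum fun n : ℕ => (ENNReal.ofReal (α ^ n * (1 - α))) • Measure.dirac (n : ℝ)

/-- Sites carrying a weight: the bulk `ℕ²` and the horizontal boundary `{(i,0) : i ≥ 1}`. -/
def HBdSites : Set Site := {v | (1 ≤ v.1 ∧ 1 ≤ v.2) ∨ (1 ≤ v.1 ∧ v.2 = 0)}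

/-- `G^q(m,n|1,0)`: the boundary passage time forced to exit the horizontal boundary,
`max_{1≤j≤m} {Σ_{i=1}^j I^q_{(i,0)} + G_{(j,1),(m,n)}}`. -/
def Gq10 (ω : Site → ℝ) (m n : ℤ) : ℝ :=
  sSup {w : ℝ | ∃ j ∈ Finset.Icc (1 : ℤ) m,
    w = (∑ i ∈ Finset.Icc 1 j, ω (i, 0)) + lppG ω (j, 1) (m, n)}

/-- `L^{p,q}(ξ) = ξ₁ log((1−p)/(1−q)) + ξ₂ log((1−r/q)/(1−r/p))`. -/
def Lfun (r p q x₁ x₂ : ℝ) : ℝ :=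
  x₁ * Real.log ((1 - p) / (1 - q)) + x₂ * Real.log ((1 - r / q) / (1 - r / p))

/-- `𝓛^{λ,q}(ξ) = inf_{q<s<1/λ} L^{s,λs}(ξ)` for `λ ∈ [1, 1/q)`, and `∞` for `λ ≥ 1/q`. -/
def calL (r q lam x₁ x₂ : ℝ) : EReal :=
  if lam < 1 / q then
    ((sInf ((fun s => Lfun r s (lam * s) x₁ x₂) '' Set.Ioo q (1 / lam)) : ℝ) : EReal)
  else ⊤

set_option maxHeartbeats 1600000



open scoped ENNReal BigOperators

namespace EJS

/-! ### Basic sequence operations -/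

def ncons {α : Type*} (x : α) (d : ℕ → α) : ℕ → α
  | 0 => x
  | i+1 => d i

@[simp] lemma ncons_zero {α : Type*} (x : α) (d : ℕ → α) : ncons x d 0 = x := rfl
@[simp] lemma ncons_succ {α : Type*} (x : α) (d : ℕ → α) (i : ℕ) : ncons x d (i+1) = d i := rfl

lemma ncons_comp_succ {α : Type*} (x : α) (d : ℕ → α) : (ncons x d) ∘ Nat.succ = d := rfl

lemma sum_range_ncons (x : ℕ) (d : ℕ → ℕ) (k : ℕ) :
    ∑ i ∈ Finset.range (k+1), ncons x d i = x + ∑ i ∈ Finset.range k, d i := by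
  rw [Finset.sum_range_succ']
  simp [add_comm]

/-! ### Geometric weights -/

noncomputable def gw (α : ℝ) (k : ℕ) : ℝ≥0∞ := ENNReal.ofReal ((1 - α) * α ^ k)

lemma gw_eq {α : ℝ} (h0 : 0 ≤ α) (h1 : α ≤ 1) (k : ℕ) :
    gw α k = (1 - ENNReal.ofReal α) * (ENNReal.ofReal α) ^ k := by
  rw [gw, ENNReal.ofReal_mul (by linarith), ENNReal.ofReal_pow h0]
  congr 1
  rw [ENNReal.ofReal_sub _ h0, ENNReal.ofReal_one]

lemma tsum_gw {α : ℝ} (h0 : 0 ≤ α) (h1 : α < 1) : ∑' k, gw α k = 1 := by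
  have hne : ENNReal.ofReal α < 1 := by
    rw [← ENNReal.ofReal_one]
    exact (ENNReal.ofReal_lt_ofReal_iff one_pos).2 h1
  have h1' : (1 : ℝ≥0∞) - ENNReal.ofReal α ≠ 0 := (tsub_pos_of_lt hne).ne'
  calc ∑' k, gw α k = (1 - ENNReal.ofReal α) * ∑' k, (ENNReal.ofReal α) ^ k := by
        rw [← ENNReal.tsum_mul_left]; exact tsum_congr fun k => gw_eq h0 h1.le k
    _ = (1 - ENNReal.ofReal α) * (1 - ENNReal.ofReal α)⁻¹ := by rw [ENNReal.tsum_geometric]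
    _ = 1 := ENNReal.mul_inv_cancel h1' (by simp)

lemma tsum_gw_mul_pow {α lam : ℝ} (h0 : 0 ≤ α) (h1 : α ≤ 1) (hl : 0 ≤ lam)
    (hal : α * lam < 1) :
    ∑' k, gw α k * (ENNReal.ofReal lam) ^ k = ENNReal.ofReal ((1 - α) / (1 - α * lam)) := by
  have key : ∀ k, gw α k * (ENNReal.ofReal lam) ^ k
      = ENNReal.ofReal (1 - α) * (ENNReal.ofReal (α * lam)) ^ k := by
    intro k
    rw [gw, ENNReal.ofReal_mul (by linarith), ENNReal.ofReal_pow h0,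
      ENNReal.ofReal_mul h0, mul_pow]
    ring
  rw [tsum_congr key, ENNReal.tsum_mul_left, ENNReal.tsum_geometric]
  have hne : ENNReal.ofReal (α * lam) < 1 := by
    rw [← ENNReal.ofReal_one]
    exact (ENNReal.ofReal_lt_ofReal_iff one_pos).2 hal
  have h1m : (1:ℝ≥0∞) - ENNReal.ofReal (α*lam) = ENNReal.ofReal (1 - α*lam) := by
    rw [ENNReal.ofReal_sub 1 (mul_nonneg h0 hl), ENNReal.ofReal_one]
  rw [h1m, ← ENNReal.ofReal_inv_of_pos (by linarith), ← ENNReal.ofReal_mul (by linarith),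
    div_eq_mul_inv]

/-- tail sums of geometric weights -/
lemma tsum_gw_tail {α : ℝ} (h0 : 0 ≤ α) (h1 : α < 1) (j : ℕ) :
    ∑' k, (if j ≤ k then gw α k else 0) = ENNReal.ofReal (α ^ j) := by
  induction j with
  | zero => simpa using tsum_gw h0 h1
  | succ j ih =>
    have split : ∑' k, (if j ≤ k then gw α k else 0)
        = gw α j + ∑' k, (if j + 1 ≤ k then gw α k else 0) := by
      rw [ENNReal.tsum_eq_add_tsum_ite j]
      simp only [le_refl, if_true]
      congr 1
      apply tsum_congr
      intro k
      rcases eq_or_ne k j with rfl | hk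
      · simp
      · have : (j ≤ k) = (j + 1 ≤ k) := by
          apply propext; constructor <;> intro h <;> omega
        simp [hk, this]
    have hfin : gw α j ≤ ENNReal.ofReal (α ^ j) := by
      rw [gw]
      apply ENNReal.ofReal_le_ofReal
      nlinarith [pow_nonneg h0 j]
    have := split ▸ ih
    -- ih : gw α j + tail(j+1) = ofReal (α ^ j)
    have h2 : ∑' k, (if j + 1 ≤ k then gw α k else 0)
        = ENNReal.ofReal (α ^ j) - gw α j := by
      rw [← this]; simp [ENNReal.add_sub_cancel_left, gw, ENNReal.ofReal_ne_top]
    rw [h2, gw, ← ENNReal.ofReal_sub _ (mul_nonneg (by linarith) (pow_nonneg h0 j))]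
    congr 1; ring


/-! ### Nested expectation functionals -/

noncomputable def EE (w : ℕ → ℝ≥0∞) : ℕ → ((ℕ → ℕ) → ℝ≥0∞) → ℝ≥0∞
  | 0, f => f (fun _ => 0)
  | m+1, f => ∑' x, w x * EE w m (fun d => f (ncons x d))

noncomputable def EEmat (w : ℕ → ℝ≥0∞) (m : ℕ) : ℕ → ((ℕ → ℕ → ℕ) → ℝ≥0∞) → ℝ≥0∞
  | 0, f => f (fun _ _ => 0)
  | n+1, f => EE w m (fun row => EEmat w m n (fun Ω => f (ncons row Ω)))

@[simp] lemma EE_zero (w : ℕ → ℝ≥0∞) (f : (ℕ → ℕ) → ℝ≥0∞) : EE w 0 f = f (fun _ => 0) := rfl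
lemma EE_succ (w : ℕ → ℝ≥0∞) (m : ℕ) (f : (ℕ → ℕ) → ℝ≥0∞) :
    EE w (m+1) f = ∑' x, w x * EE w m (fun d => f (ncons x d)) := rfl
@[simp] lemma EEmat_zero (w : ℕ → ℝ≥0∞) (m : ℕ) (f : (ℕ → ℕ → ℕ) → ℝ≥0∞) :
    EEmat w m 0 f = f (fun _ _ => 0) := rfl
lemma EEmat_succ (w : ℕ → ℝ≥0∞) (m n : ℕ) (f : (ℕ → ℕ → ℕ) → ℝ≥0∞) :
    EEmat w m (n+1) f = EE w m (fun row => EEmat w m n (fun Ω => f (ncons row Ω))) := rfl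

lemma EE_mono (w : ℕ → ℝ≥0∞) (m : ℕ) {f g : (ℕ → ℕ) → ℝ≥0∞} (h : ∀ d, f d ≤ g d) :
    EE w m f ≤ EE w m g := by
  induction m generalizing f g with
  | zero => exact h _
  | succ m ih =>
    exact ENNReal.tsum_le_tsum fun x => mul_le_mul_right (ih fun d => h _) _

lemma EE_mul_left (w : ℕ → ℝ≥0∞) (m : ℕ) (c : ℝ≥0∞) (f : (ℕ → ℕ) → ℝ≥0∞) :
    EE w m (fun d => c * f d) = c * EE w m f := by
  induction m generalizing f with
  | zero => rfl
  | succ m ih =>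
    rw [EE_succ, EE_succ, ← ENNReal.tsum_mul_left]
    exact tsum_congr fun x => by rw [ih]; ring

lemma EE_tsum_comm {β : Type*} (w : ℕ → ℝ≥0∞) (m : ℕ) (h : β → (ℕ → ℕ) → ℝ≥0∞) :
    EE w m (fun d => ∑' y, h y d) = ∑' y, EE w m (h y) := by
  induction m generalizing h with
  | zero => rfl
  | succ m ih =>
    simp only [EE_succ]
    rw [ENNReal.tsum_comm (f := fun y x => w x * EE w m (fun d => h y (ncons x d)))]
    exact tsum_congr fun x => by
      rw [ih fun y d => h y (ncons x d), ENNReal.tsum_mul_left]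

lemma EE_congr (w : ℕ → ℝ≥0∞) (m : ℕ) {f g : (ℕ → ℕ) → ℝ≥0∞} (h : ∀ d, f d = g d) :
    EE w m f = EE w m g := by
  have := congrArg (EE w m) (funext h); exact this

lemma EE_const (w : ℕ → ℝ≥0∞) (hw : ∑' x, w x = 1) (m : ℕ) (c : ℝ≥0∞) :
    EE w m (fun _ => c) = c := by
  induction m with
  | zero => rfl
  | succ m ih =>
    rw [EE_succ]
    simp only [ih]
    rw [ENNReal.tsum_mul_right, hw, one_mul]

/-- commute an `EE` block past an abstract functional -/
lemma EE_comm {γ : Type*} (T : (γ → ℝ≥0∞) → ℝ≥0∞)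
    (hT1 : ∀ (c : ℝ≥0∞) (g : γ → ℝ≥0∞), T (fun y => c * g y) = c * T g)
    (hT2 : ∀ (h : ℕ → γ → ℝ≥0∞), T (fun y => ∑' x, h x y) = ∑' x, T (h x))
    (w : ℕ → ℝ≥0∞) (m : ℕ) (F : (ℕ → ℕ) → γ → ℝ≥0∞) :
    EE w m (fun d => T (F d)) = T (fun y => EE w m (fun d => F d y)) := by
  induction m generalizing F with
  | zero => rfl
  | succ m ih =>
    rw [EE_succ]
    have : ∀ x, EE w m (fun d => T (F (ncons x d)))
        = T (fun y => EE w m fun d => F (ncons x d) y) := fun x => ih _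
    calc (∑' x, w x * EE w m fun d => T (F (ncons x d)))
        = ∑' x, T (fun y => w x * EE w m fun d => F (ncons x d) y) := by
          exact tsum_congr fun x => by rw [this, hT1]
      _ = T (fun y => ∑' x, w x * EE w m fun d => F (ncons x d) y) := (hT2 _).symm
      _ = _ := congrArg T (funext fun y => (EE_succ w m (fun d => F d y)).symm)

lemma EEmat_mul_left (w : ℕ → ℝ≥0∞) (m n : ℕ) (c : ℝ≥0∞) (f : (ℕ → ℕ → ℕ) → ℝ≥0∞) :
    EEmat w m n (fun Ω => c * f Ω) = c * EEmat w m n f := by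
  induction n generalizing f with
  | zero => rfl
  | succ n ih =>
    rw [EEmat_succ, EEmat_succ, ← EE_mul_left]
    exact EE_congr _ _ fun row => ih _

lemma EEmat_tsum_comm {β : Type*} (w : ℕ → ℝ≥0∞) (m n : ℕ) (h : β → (ℕ → ℕ → ℕ) → ℝ≥0∞) :
    EEmat w m n (fun Ω => ∑' y, h y Ω) = ∑' y, EEmat w m n (h y) := by
  induction n generalizing h with
  | zero => rfl
  | succ n ih =>
    simp only [EEmat_succ]
    rw [← EE_tsum_comm]
    exact EE_congr _ _ fun row => ih _

lemma EEmat_mono (w : ℕ → ℝ≥0∞) (m n : ℕ) {f g : (ℕ → ℕ → ℕ) → ℝ≥0∞}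
    (h : ∀ Ω, f Ω ≤ g Ω) : EEmat w m n f ≤ EEmat w m n g := by
  induction n generalizing f g with
  | zero => exact h _
  | succ n ih => exact EE_mono _ _ fun row => ih fun Ω => h _

lemma EEmat_congr (w : ℕ → ℝ≥0∞) (m n : ℕ) {f g : (ℕ → ℕ → ℕ) → ℝ≥0∞}
    (h : ∀ Ω, f Ω = g Ω) : EEmat w m n f = EEmat w m n g :=
  congrArg (EEmat w m n) (funext h)

/-- commute an `EEmat` block past an abstract functional -/
lemma EEmat_comm {γ : Type*} (T : (γ → ℝ≥0∞) → ℝ≥0∞)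
    (hT1 : ∀ (c : ℝ≥0∞) (g : γ → ℝ≥0∞), T (fun y => c * g y) = c * T g)
    (hT2 : ∀ (h : ℕ → γ → ℝ≥0∞), T (fun y => ∑' x, h x y) = ∑' x, T (h x))
    (w : ℕ → ℝ≥0∞) (m n : ℕ) (F : (ℕ → ℕ → ℕ) → γ → ℝ≥0∞) :
    EEmat w m n (fun Ω => T (F Ω)) = T (fun y => EEmat w m n (fun Ω => F Ω y)) := by
  induction n generalizing F with
  | zero => rfl
  | succ n ih =>
    simp only [EEmat_succ]
    calc EE w m (fun row => EEmat w m n fun Ω => T (F (ncons row Ω)))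
        = EE w m (fun row => T (fun y => EEmat w m n fun Ω => F (ncons row Ω) y)) :=
          EE_congr _ _ fun row => ih _
      _ = T (fun y => EE w m (fun row => EEmat w m n fun Ω => F (ncons row Ω) y)) :=
          EE_comm T hT1 hT2 w m _
      _ = _ := rfl

/-! ### one-dimensional stochastic dominance -/

lemma tsum_weight_mono {w w' : ℕ → ℝ≥0∞}
    (hw : ∑' k, w k = 1) (hw' : ∑' k, w' k = 1)
    (htail : ∀ j : ℕ, ∑' k, (if j + 1 ≤ k then w k else 0) ≤ ∑' k, (if j + 1 ≤ k then w' k else 0))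
    (g : ℕ → ℝ≥0∞) (hg : Monotone g) :
    ∑' k, w k * g k ≤ ∑' k, w' k * g k := by
  -- layer cake: g k = g 0 + ∑_{j<k} (g (j+1) - g j)
  have layer : ∀ k, g k = g 0 + ∑ j ∈ Finset.range k, (g (j+1) - g j) := by
    intro k
    induction k with
    | zero => simp
    | succ k ih =>
      rw [Finset.sum_range_succ, ← add_assoc, ← ih]
      exact (add_tsub_cancel_of_le (hg (Nat.le_succ k))).symm
  have expand : ∀ (v : ℕ → ℝ≥0∞), (∑' k, v k = 1) →
      ∑' k, v k * g k = g 0 + ∑' j, (g (j+1) - g j) * ∑' k, (if j + 1 ≤ k then v k else 0) := by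
    intro v hv
    calc ∑' k, v k * g k
        = ∑' k, (v k * g 0 + ∑' j, (if j + 1 ≤ k then v k * (g (j+1) - g j) else 0)) := by
          apply tsum_congr; intro k
          rw [layer k, mul_add]
          congr 1
          rw [Finset.mul_sum]
          have hz : ∀ j ∉ Finset.range k, (if j + 1 ≤ k then v k * (g (j+1) - g j) else 0) = 0 := by
            intro j hj
            have : ¬ (j + 1 ≤ k) := by simp only [Finset.mem_range] at hj; omega
            simp [this]
          rw [tsum_eq_sum hz]
          apply Finset.sum_congr rfl
          intro j hj
          have : j + 1 ≤ k := by simp only [Finset.mem_range] at hj; omega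
          simp [this]
      _ = g 0 + ∑' j, (g (j+1) - g j) * ∑' k, (if j + 1 ≤ k then v k else 0) := by
          rw [ENNReal.tsum_add, ENNReal.tsum_mul_right, hv, one_mul]
          congr 1
          rw [ENNReal.tsum_comm]
          apply tsum_congr; intro j
          rw [← ENNReal.tsum_mul_left]
          apply tsum_congr; intro k
          by_cases hj : j + 1 ≤ k <;> simp [hj, mul_comm]
  rw [expand w hw, expand w' hw']
  exact add_le_add_right (ENNReal.tsum_le_tsum fun j => mul_le_mul_right (htail j) _) _


/-- The corner-flip bijection on ℕ³, sending `(a,b,z)` to `(y,v,x)`. -/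
def cornerEquiv : (ℕ × ℕ × ℕ) ≃ (ℕ × ℕ × ℕ) where
  toFun s := (s.2.2 + (s.2.1 - s.1), min s.1 s.2.1, s.2.2 + (s.1 - s.2.1))
  invFun t := (t.2.1 + (t.2.2 - t.1), t.2.1 + (t.1 - t.2.2), min t.2.2 t.1)
  left_inv s := by
    obtain ⟨a, b, z⟩ := s
    simp only [Prod.mk.injEq]
    omega
  right_inv t := by
    obtain ⟨y, v, x⟩ := t
    simp only [Prod.mk.injEq]
    omega

lemma gw_scalar {p c r : ℝ} (hp0 : 0 ≤ p) (hp1 : p < 1) (hc0 : 0 ≤ c) (hc1 : c < 1)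
    (hr : r = p * c) (a b : ℕ) :
    ∑' z : ℕ, gw c (z + (b - a)) * gw r (min a b) * gw p (z + (a - b))
      = gw p a * gw c b := by
  have hr0 : 0 ≤ r := hr ▸ mul_nonneg hp0 hc0
  have hr1 : r < 1 := by rw [hr]; nlinarith
  have hc0' : (0:ℝ) ≤ 1 - c := by linarith
  have hp0' : (0:ℝ) ≤ 1 - p := by linarith
  have hr0' : (0:ℝ) ≤ 1 - r := by linarith
  have n1 : (0:ℝ) ≤ (1-c) * c ^ (b-a) := mul_nonneg hc0' (pow_nonneg hc0 _)
  have n2 : (0:ℝ) ≤ (1-r) * r ^ min a b := mul_nonneg hr0' (pow_nonneg hr0 _)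
  have n3 : (0:ℝ) ≤ (1-p) * p ^ (a-b) := mul_nonneg hp0' (pow_nonneg hp0 _)
  have nBIG : (0:ℝ) ≤ (1-c) * c ^ (b-a) * ((1-r) * r ^ min a b) * ((1-p) * p ^ (a-b)) :=
    mul_nonneg (mul_nonneg n1 n2) n3
  have term : ∀ z : ℕ, gw c (z + (b - a)) * gw r (min a b) * gw p (z + (a - b))
      = ENNReal.ofReal ((1-c) * c ^ (b-a) * ((1-r) * r ^ min a b) * ((1-p) * p ^ (a-b)))
        * (ENNReal.ofReal r) ^ z := by
    intro z
    have A : (0:ℝ) ≤ (1-c) * c ^ (z + (b-a)) := mul_nonneg hc0' (pow_nonneg hc0 _)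
    have B : (0:ℝ) ≤ (1-c) * c ^ (z + (b-a)) * ((1-r) * r ^ min a b) := mul_nonneg A n2
    have hreal : (1-c) * c ^ (z + (b-a)) * ((1-r) * r ^ min a b) * ((1-p) * p ^ (z + (a-b)))
        = (1-c) * c ^ (b-a) * ((1-r) * r ^ min a b) * ((1-p) * p ^ (a-b)) * r ^ z := by
      rw [pow_add, pow_add, hr, mul_pow]
      ring
    rw [gw, gw, gw, ← ENNReal.ofReal_mul A, ← ENNReal.ofReal_mul B, hreal,
      ENNReal.ofReal_mul nBIG, ENNReal.ofReal_pow hr0]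
  rw [tsum_congr term, ENNReal.tsum_mul_left, ENNReal.tsum_geometric]
  have h1m : (1:ℝ≥0∞) - ENNReal.ofReal r = ENNReal.ofReal (1 - r) := by
    rw [ENNReal.ofReal_sub 1 hr0, ENNReal.ofReal_one]
  rw [h1m]
  have key : (1-c) * c ^ (b-a) * ((1-r) * r ^ min a b) * ((1-p) * p ^ (a-b))
      = ((1-p) * p ^ a * ((1-c) * c ^ b)) * (1 - r) := by
    have hpc : p ^ (a - b) * c ^ (b - a) * r ^ min a b = p ^ a * c ^ b := by
      rcases le_total a b with h | h
      · obtain ⟨d, rfl⟩ := Nat.exists_eq_add_of_le h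
        have h1 : a - (a + d) = 0 := by omega
        have h2 : a + d - a = d := by omega
        have h3 : min a (a + d) = a := by omega
        rw [h1, h2, h3, hr, pow_zero, mul_pow, pow_add]
        ring
      · obtain ⟨d, rfl⟩ := Nat.exists_eq_add_of_le h
        have h1 : b + d - b = d := by omega
        have h2 : b - (b + d) = 0 := by omega
        have h3 : min (b + d) b = b := by omega
        rw [h1, h2, h3, hr, pow_zero, mul_pow, pow_add]
        ring
    calc (1-c) * c ^ (b-a) * ((1-r) * r ^ min a b) * ((1-p) * p ^ (a-b))
        = (1-p) * (1-c) * (1-r) * (p ^ (a-b) * c ^ (b-a) * r ^ min a b) := by ring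
      _ = (1-p) * (1-c) * (1-r) * (p ^ a * c ^ b) := by rw [hpc]
      _ = _ := by ring
  have hne0 : ENNReal.ofReal (1 - r) ≠ 0 := by
    simp only [ne_eq, ENNReal.ofReal_eq_zero, not_le]; linarith
  rw [key, ENNReal.ofReal_mul (by exact mul_nonneg (mul_nonneg hp0' (pow_nonneg hp0 _)) (mul_nonneg hc0' (pow_nonneg hc0 _))),
    mul_assoc, ENNReal.mul_inv_cancel hne0 ENNReal.ofReal_ne_top, mul_one, gw, gw,
    ENNReal.ofReal_mul (by exact mul_nonneg hp0' (pow_nonneg hp0 _))]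

/-- The corner lemma: one-step Burke property in weak (integrated) form. -/
lemma corner {p c r : ℝ} (hp0 : 0 ≤ p) (hp1 : p < 1) (hc0 : 0 ≤ c) (hc1 : c < 1)
    (hr : r = p * c) (g : ℕ → ℕ → ℝ≥0∞) :
    ∑' y, gw c y * ∑' v, gw r v * ∑' x, gw p x * g (v + (x - y)) (v + (y - x))
      = ∑' x, gw p x * ∑' y, gw c y * g x y := by
  have lhs_eq : ∑' y, gw c y * ∑' v, gw r v * ∑' x, gw p x * g (v + (x - y)) (v + (y - x))
      = ∑' t : ℕ × ℕ × ℕ, gw c t.1 * gw r t.2.1 * gw p t.2.2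
          * g (t.2.1 + (t.2.2 - t.1)) (t.2.1 + (t.1 - t.2.2)) := by
    rw [ENNReal.tsum_prod']
    refine tsum_congr fun y => ?_
    rw [ENNReal.tsum_prod', ← ENNReal.tsum_mul_left]
    refine tsum_congr fun v => ?_
    calc gw c y * (gw r v * ∑' x, gw p x * g (v + (x - y)) (v + (y - x)))
        = (gw c y * gw r v) * ∑' x, gw p x * g (v + (x - y)) (v + (y - x)) := by ring
      _ = ∑' x, (gw c y * gw r v) * (gw p x * g (v + (x - y)) (v + (y - x))) :=
          (ENNReal.tsum_mul_left).symm
      _ = _ := tsum_congr fun x => by ring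
  rw [lhs_eq, ← Equiv.tsum_eq cornerEquiv]
  have term_eq : ∀ s : ℕ × ℕ × ℕ,
      (fun t : ℕ × ℕ × ℕ => gw c t.1 * gw r t.2.1 * gw p t.2.2
        * g (t.2.1 + (t.2.2 - t.1)) (t.2.1 + (t.1 - t.2.2))) (cornerEquiv s)
      = gw c (s.2.2 + (s.2.1 - s.1)) * gw r (min s.1 s.2.1) * gw p (s.2.2 + (s.1 - s.2.1))
          * g s.1 s.2.1 := by
    rintro ⟨a, b, z⟩
    have e1 : min a b + (z + (a - b) - (z + (b - a))) = a := by omega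
    have e2 : min a b + (z + (b - a) - (z + (a - b))) = b := by omega
    simp only [cornerEquiv, Equiv.coe_fn_mk, e1, e2]
  rw [tsum_congr term_eq, ENNReal.tsum_prod']
  refine tsum_congr fun a => ?_
  rw [ENNReal.tsum_prod', ← ENNReal.tsum_mul_left]
  refine tsum_congr fun b => ?_
  calc (∑' z, gw c (z + (b - a)) * gw r (min a b) * gw p (z + (a - b)) * g a b)
      = (∑' z, gw c (z + (b - a)) * gw r (min a b) * gw p (z + (a - b))) * g a b := by
        rw [ENNReal.tsum_mul_right]
    _ = (gw p a * gw c b) * g a b := by rw [gw_scalar hp0 hp1 hc0 hc1 hr]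
    _ = gw p a * (gw c b * g a b) := by ring

/-! ### K-thread, row update, and the Burke property -/

def kth (K0 : ℕ) (ω I : ℕ → ℕ) : ℕ → ℕ
  | 0 => K0
  | i+1 => ω i + (kth K0 ω I i - I i)

def nrow (K0 : ℕ) (ω I : ℕ → ℕ) (i : ℕ) : ℕ := ω i + (I i - kth K0 ω I i)

lemma kth_ncons (K0 a b : ℕ) (ω I : ℕ → ℕ) (i : ℕ) :
    kth K0 (ncons a ω) (ncons b I) (i+1) = kth (a + (K0 - b)) ω I i := by
  induction i with
  | zero => rfl
  | succ i ih =>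
    show ncons a ω (i+1) + (kth K0 (ncons a ω) (ncons b I) (i+1) - ncons b I (i+1))
        = ω i + (kth (a + (K0 - b)) ω I i - I i)
    rw [ih]; rfl

lemma nrow_ncons (K0 a b : ℕ) (ω I : ℕ → ℕ) :
    nrow K0 (ncons a ω) (ncons b I) = ncons (a + (b - K0)) (nrow (a + (K0 - b)) ω I) := by
  funext i
  cases i with
  | zero => rfl
  | succ i =>
    show ncons a ω (i+1) + (ncons b I (i+1) - kth K0 (ncons a ω) (ncons b I) (i+1))
        = nrow (a + (K0 - b)) ω I i
    rw [kth_ncons]; rfl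

lemma nrow_zero_fun (K0 : ℕ) : nrow K0 (fun _ => 0) (fun _ => 0) = (fun _ => 0) := by
  funext i; simp [nrow]

/-- The row version of the Burke property. -/
lemma row_burke {p c r : ℝ} (hp0 : 0 ≤ p) (hp1 : p < 1) (hc0 : 0 ≤ c) (hc1 : c < 1)
    (hr : r = p * c) :
    ∀ (m : ℕ) (g : (ℕ → ℕ) → ℕ → ℝ≥0∞),
    ∑' J, gw c J * EE (gw r) m (fun ω => EE (gw p) m (fun I => g (nrow J ω I) (kth J ω I m)))
      = EE (gw p) m (fun I => ∑' J, gw c J * g I J) := by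
  intro m
  induction m with
  | zero =>
    intro g
    simp only [EE_zero]
    refine tsum_congr fun J => ?_
    rw [nrow_zero_fun]
    rfl
  | succ m ih =>
    intro g
    have step1 : ∀ J : ℕ,
        EE (gw r) (m+1) (fun ω => EE (gw p) (m+1)
            (fun I => g (nrow J ω I) (kth J ω I (m+1))))
        = ∑' v, gw r v * ∑' x, gw p x *
            EE (gw r) m (fun ω => EE (gw p) m
              (fun I => g (ncons (v + (x - J)) (nrow (v + (J - x)) ω I))
                (kth (v + (J - x)) ω I m))) := by
      intro J
      rw [EE_succ]
      refine tsum_congr fun v => ?_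
      congr 1
      have inner : ∀ ω : ℕ → ℕ,
          EE (gw p) (m+1) (fun I => g (nrow J (ncons v ω) I) (kth J (ncons v ω) I (m+1)))
          = ∑' x, gw p x * EE (gw p) m
              (fun I => g (ncons (v + (x - J)) (nrow (v + (J - x)) ω I))
                (kth (v + (J - x)) ω I m)) := by
        intro ω
        rw [EE_succ]
        refine tsum_congr fun x => ?_
        congr 1
        refine EE_congr _ _ fun I => ?_
        rw [nrow_ncons, kth_ncons]
      calc EE (gw r) m (fun ω => EE (gw p) (m+1)
              (fun I => g (nrow J (ncons v ω) I) (kth J (ncons v ω) I (m+1))))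
          = EE (gw r) m (fun ω => ∑' x, gw p x * EE (gw p) m
              (fun I => g (ncons (v + (x - J)) (nrow (v + (J - x)) ω I))
                (kth (v + (J - x)) ω I m))) := EE_congr _ _ inner
        _ = ∑' x, EE (gw r) m (fun ω => gw p x * EE (gw p) m
              (fun I => g (ncons (v + (x - J)) (nrow (v + (J - x)) ω I))
                (kth (v + (J - x)) ω I m))) := EE_tsum_comm _ _ _
        _ = ∑' x, gw p x * EE (gw r) m (fun ω => EE (gw p) m
              (fun I => g (ncons (v + (x - J)) (nrow (v + (J - x)) ω I))
                (kth (v + (J - x)) ω I m))) := tsum_congr fun x => EE_mul_left _ _ _ _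
    calc ∑' J, gw c J * EE (gw r) (m+1) (fun ω => EE (gw p) (m+1)
            (fun I => g (nrow J ω I) (kth J ω I (m+1))))
        = ∑' J, gw c J * ∑' v, gw r v * ∑' x, gw p x *
            ((fun A K1 => EE (gw r) m (fun ω => EE (gw p) m
              (fun I => g (ncons A (nrow K1 ω I)) (kth K1 ω I m))))
              (v + (x - J)) (v + (J - x))) := by
          refine tsum_congr fun J => ?_
          rw [step1 J]
      _ = ∑' x, gw p x * ∑' J, gw c J *
            ((fun A K1 => EE (gw r) m (fun ω => EE (gw p) m
              (fun I => g (ncons A (nrow K1 ω I)) (kth K1 ω I m)))) x J) := by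
          exact corner hp0 hp1 hc0 hc1 hr
            (fun A K1 => EE (gw r) m (fun ω => EE (gw p) m
              (fun I => g (ncons A (nrow K1 ω I)) (kth K1 ω I m))))
      _ = ∑' x, gw p x * EE (gw p) m (fun I => ∑' J, gw c J * g (ncons x I) J) := by
          refine tsum_congr fun x => ?_
          congr 1
          exact ih (fun I K => g (ncons x I) K)

      _ = EE (gw p) (m+1) (fun I => ∑' J, gw c J * g I J) := by
          rw [EE_succ]

/-- Apply rows `0,…,j-1` (bottom to top) to the bottom increments. -/
def topI : ℕ → (ℕ → ℕ) → (ℕ → (ℕ → ℕ)) → (ℕ → ℕ) → (ℕ → ℕ)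
  | 0, _, _, B => B
  | j+1, L, Om, B => topI j (L ∘ Nat.succ) (Om ∘ Nat.succ) (nrow (L 0) (Om 0) B)

lemma topI_ncons (j : ℕ) (l0 : ℕ) (L : ℕ → ℕ) (row : ℕ → ℕ) (Om : ℕ → (ℕ → ℕ)) (B : ℕ → ℕ) :
    topI (j+1) (ncons l0 L) (ncons row Om) B = topI j L Om (nrow l0 row B) := rfl

/-- The full Burke property: the top increments have the law of the bottom ones. -/
lemma full_burke {p c r : ℝ} (hp0 : 0 ≤ p) (hp1 : p < 1) (hc0 : 0 ≤ c) (hc1 : c < 1)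
    (hr : r = p * c) :
    ∀ (n m : ℕ) (h : (ℕ → ℕ) → ℝ≥0∞),
    EE (gw c) n (fun L => EEmat (gw r) m n (fun Om => EE (gw p) m (fun B => h (topI n L Om B))))
      = EE (gw p) m h := by
  intro n
  induction n with
  | zero => intro m h; rfl
  | succ n ih =>
    intro m h
    calc EE (gw c) (n+1) (fun L => EEmat (gw r) m (n+1)
            (fun Om => EE (gw p) m (fun B => h (topI (n+1) L Om B))))
        = ∑' l0, gw c l0 * EE (gw c) n (fun L => EE (gw r) m (fun row =>
            EEmat (gw r) m n (fun Om => EE (gw p) m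
              (fun B => h (topI n L Om (nrow l0 row B)))))) := by
          rfl
      _ = EE (gw c) n (fun L => ∑' l0, gw c l0 * EE (gw r) m (fun row =>
            EEmat (gw r) m n (fun Om => EE (gw p) m
              (fun B => h (topI n L Om (nrow l0 row B)))))) := by
          symm
          calc EE (gw c) n (fun L => ∑' l0, gw c l0 * EE (gw r) m (fun row =>
                EEmat (gw r) m n (fun Om => EE (gw p) m
                  (fun B => h (topI n L Om (nrow l0 row B))))))
              = ∑' l0, EE (gw c) n (fun L => gw c l0 * EE (gw r) m (fun row =>
                EEmat (gw r) m n (fun Om => EE (gw p) m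
                  (fun B => h (topI n L Om (nrow l0 row B)))))) := EE_tsum_comm _ _ _
            _ = ∑' l0, gw c l0 * EE (gw c) n (fun L => EE (gw r) m (fun row =>
                EEmat (gw r) m n (fun Om => EE (gw p) m
                  (fun B => h (topI n L Om (nrow l0 row B)))))) :=
                tsum_congr fun l0 => EE_mul_left _ _ _ _
      _ = EE (gw c) n (fun L => ∑' l0, gw c l0 * EEmat (gw r) m n (fun Om =>
            EE (gw r) m (fun row => EE (gw p) m
              (fun B => h (topI n L Om (nrow l0 row B)))))) := by
          refine EE_congr _ _ fun L => ?_
          refine tsum_congr fun l0 => ?_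
          congr 1
          exact EE_comm (EEmat (gw r) m n) (EEmat_mul_left _ _ _) (EEmat_tsum_comm _ _ _) _ _ _
      _ = EE (gw c) n (fun L => EEmat (gw r) m n (fun Om =>
            ∑' l0, gw c l0 * EE (gw r) m (fun row => EE (gw p) m
              (fun B => h (topI n L Om (nrow l0 row B)))))) := by
          refine EE_congr _ _ fun L => ?_
          rw [EEmat_tsum_comm]
          refine tsum_congr fun l0 => ?_
          rw [EEmat_mul_left]
      _ = EE (gw c) n (fun L => EEmat (gw r) m n (fun Om =>
            EE (gw p) m (fun B => h (topI n L Om B)))) := by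
          refine EE_congr _ _ fun L => ?_
          refine EEmat_congr _ _ _ fun Om => ?_
          have := row_burke hp0 hp1 hc0 hc1 hr m (fun I _K => h (topI n L Om I))
          rw [this]
          refine EE_congr _ _ fun I => ?_
          rw [ENNReal.tsum_mul_right, tsum_gw hc0 hc1, one_mul]
      _ = EE (gw p) m h := ih m h

/-! ### The boundary LPP value -/

def bG (L B : ℕ → ℕ) (Om : ℕ → ℕ → ℕ) : ℕ → ℕ → ℕ
  | i, 0 => ∑ k ∈ Finset.range i, B k
  | 0, j+1 => ∑ k ∈ Finset.range (j+1), L k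
  | i+1, j+1 => Om j i + max (bG L B Om i (j+1)) (bG L B Om (i+1) j)
  termination_by i j => (j, i)

lemma bG_zero_right (L B : ℕ → ℕ) (Om : ℕ → ℕ → ℕ) (i : ℕ) :
    bG L B Om i 0 = ∑ k ∈ Finset.range i, B k := by
  cases i <;> simp [bG]

lemma bG_zero_left (L B : ℕ → ℕ) (Om : ℕ → ℕ → ℕ) (j : ℕ) :
    bG L B Om 0 j = ∑ k ∈ Finset.range j, L k := by
  cases j <;> simp [bG]

lemma bG_succ_succ (L B : ℕ → ℕ) (Om : ℕ → ℕ → ℕ) (i j : ℕ) :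
    bG L B Om (i+1) (j+1) = Om j i + max (bG L B Om i (j+1)) (bG L B Om (i+1) j) := by
  simp [bG]

lemma topI_succ_back (j : ℕ) : ∀ (L : ℕ → ℕ) (Om : ℕ → (ℕ → ℕ)) (B : ℕ → ℕ),
    topI (j+1) L Om B = nrow (L j) (Om j) (topI j L Om B) := by
  induction j with
  | zero => intro L Om B; rfl
  | succ j ih =>
    intro L Om B
    show topI (j+1) (L ∘ Nat.succ) (Om ∘ Nat.succ) (nrow (L 0) (Om 0) B) = _
    rw [ih]
    rfl

/-- horizontal increments of `bG` are given by `topI`. -/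
lemma bG_row_inc (L B : ℕ → ℕ) (Om : ℕ → ℕ → ℕ) :
    ∀ j i, bG L B Om (i+1) j = bG L B Om i j + topI j L Om B i := by
  intro j
  induction j with
  | zero =>
    intro i
    rw [bG_zero_right, bG_zero_right, Finset.sum_range_succ]
    rfl
  | succ j ihA =>
    -- vertical increments of column of row j+1 are the K-thread
    have hB : ∀ i, bG L B Om i (j+1)
        = bG L B Om i j + kth (L j) (Om j) (topI j L Om B) i := by
      intro i
      induction i with
      | zero =>
        rw [bG_zero_left, bG_zero_left, Finset.sum_range_succ]
        rfl
      | succ i ihi =>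
        rw [bG_succ_succ, ihi, ihA i]
        have hk : kth (L j) (Om j) (topI j L Om B) (i+1)
            = Om j i + (kth (L j) (Om j) (topI j L Om B) i - topI j L Om B i) := rfl
        rw [hk]
        omega
    intro i
    rw [hB (i+1), hB i, ihA i, topI_succ_back]
    have hk : kth (L j) (Om j) (topI j L Om B) (i+1)
        = Om j i + (kth (L j) (Om j) (topI j L Om B) i - topI j L Om B i) := rfl
    have hn : nrow (L j) (Om j) (topI j L Om B) i
        = Om j i + (topI j L Om B i - kth (L j) (Om j) (topI j L Om B) i) := rfl
    rw [hk, hn]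
    omega

lemma bG_sum (L B : ℕ → ℕ) (Om : ℕ → ℕ → ℕ) (n : ℕ) :
    ∀ m, bG L B Om m n = ∑ k ∈ Finset.range n, L k + ∑ i ∈ Finset.range m, topI n L Om B i := by
  intro m
  induction m with
  | zero => simp [bG_zero_left]
  | succ m ih =>
    rw [bG_row_inc, ih, Finset.sum_range_succ]
    omega

lemma bG_mono_L {L L' B : ℕ → ℕ} {Om : ℕ → ℕ → ℕ} (h : ∀ k, L k ≤ L' k) :
    ∀ j i, bG L B Om i j ≤ bG L' B Om i j := by
  intro j
  induction j with
  | zero => intro i; rw [bG_zero_right, bG_zero_right]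
  | succ j ihj =>
    intro i
    induction i with
    | zero =>
      rw [bG_zero_left, bG_zero_left]
      exact Finset.sum_le_sum fun k _ => h k
    | succ i ihi =>
      rw [bG_succ_succ, bG_succ_succ]
      exact add_le_add le_rfl (max_le_max ihi (ihj (i+1)))

lemma bG_mono_B {L B B' : ℕ → ℕ} {Om : ℕ → ℕ → ℕ} (h : ∀ k, B k ≤ B' k) :
    ∀ j i, bG L B Om i j ≤ bG L B' Om i j := by
  intro j
  induction j with
  | zero =>
    intro i
    rw [bG_zero_right, bG_zero_right]
    exact Finset.sum_le_sum fun k _ => h k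
  | succ j ihj =>
    intro i
    induction i with
    | zero => rw [bG_zero_left, bG_zero_left]
    | succ i ihi =>
      rw [bG_succ_succ, bG_succ_succ]
      exact add_le_add le_rfl (max_le_max ihi (ihj (i+1)))

lemma bG_mono_right (L B : ℕ → ℕ) (Om : ℕ → ℕ → ℕ) (i j : ℕ) :
    bG L B Om i j ≤ bG L B Om i (j+1) := by
  cases i with
  | zero =>
    rw [bG_zero_left, bG_zero_left]
    exact Finset.sum_le_sum_of_subset (Finset.range_subset_range.2 (Nat.le_succ j))
  | succ i =>
    rw [bG_succ_succ]
    calc bG L B Om (i+1) j ≤ max (bG L B Om i (j+1)) (bG L B Om (i+1) j) := le_max_right _ _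
      _ ≤ _ := Nat.le_add_left _ _

lemma bG_mono_left (L B : ℕ → ℕ) (Om : ℕ → ℕ → ℕ) (i j : ℕ) :
    bG L B Om i j ≤ bG L B Om (i+1) j := by
  cases j with
  | zero =>
    rw [bG_zero_right, bG_zero_right]
    exact Finset.sum_le_sum_of_subset (Finset.range_subset_range.2 (Nat.le_succ i))
  | succ j =>
    rw [bG_succ_succ]
    calc bG L B Om i (j+1) ≤ max (bG L B Om i (j+1)) (bG L B Om (i+1) j) := le_max_left _ _
      _ ≤ _ := Nat.le_add_left _ _

/-! ### Tilting, moment computation, dominance -/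

lemma gw_tilt {c lam : ℝ} (hc0 : 0 ≤ c) (hc1 : c < 1) (hlam : 1 ≤ lam) (k : ℕ) :
    gw (c/lam) k * (ENNReal.ofReal lam) ^ k
      = ENNReal.ofReal ((1 - c/lam) / (1 - c)) * gw c k := by
  have hl0 : (0:ℝ) < lam := lt_of_lt_of_le one_pos hlam
  have hcl : c / lam ≤ c := by
    apply div_le_self hc0 hlam
  have hcl1 : c / lam < 1 := lt_of_le_of_lt hcl hc1
  have hlk : lam ^ k ≠ 0 := pow_ne_zero _ hl0.ne'
  have h1 : ((1 - c/lam) * (c/lam)^k) * lam^k = (1 - c/lam) * c^k := by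
    rw [div_pow, mul_assoc, div_mul_cancel₀ _ hlk]
  have h2 : ((1 - c/lam)/(1-c)) * ((1-c) * c^k) = (1 - c/lam) * c^k := by
    rw [← mul_assoc, div_mul_cancel₀]
    linarith
  have A : (0:ℝ) ≤ (1 - c/lam) * (c/lam)^k :=
    mul_nonneg (by linarith) (pow_nonneg (div_nonneg hc0 hl0.le) _)
  have B : (0:ℝ) ≤ (1 - c/lam)/(1-c) := div_nonneg (by linarith) (by linarith)
  rw [gw, gw, ← ENNReal.ofReal_pow hl0.le, ← ENNReal.ofReal_mul A, h1,
    ← ENNReal.ofReal_mul B, h2]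

lemma EE_tilt {c lam : ℝ} (hc0 : 0 ≤ c) (hc1 : c < 1) (hlam : 1 ≤ lam) :
    ∀ (n : ℕ) (G : (ℕ → ℕ) → ℝ≥0∞),
    EE (gw (c/lam)) n (fun L => (ENNReal.ofReal lam) ^ (∑ j ∈ Finset.range n, L j) * G L)
      = (ENNReal.ofReal ((1 - c/lam) / (1 - c))) ^ n * EE (gw c) n G := by
  intro n
  induction n with
  | zero => intro G; simp
  | succ n ih =>
    intro G
    rw [EE_succ, EE_succ, ← ENNReal.tsum_mul_left]
    refine tsum_congr fun x => ?_
    calc gw (c/lam) x * EE (gw (c/lam)) n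
            (fun d => (ENNReal.ofReal lam) ^ (∑ j ∈ Finset.range (n+1), ncons x d j) * G (ncons x d))
        = gw (c/lam) x * ((ENNReal.ofReal lam) ^ x * EE (gw (c/lam)) n
            (fun d => (ENNReal.ofReal lam) ^ (∑ j ∈ Finset.range n, d j) * G (ncons x d))) := by
          congr 1
          rw [← EE_mul_left]
          refine EE_congr _ _ fun d => ?_
          rw [sum_range_ncons, pow_add]
          ring
      _ = (gw (c/lam) x * (ENNReal.ofReal lam) ^ x) *
            ((ENNReal.ofReal ((1 - c/lam) / (1 - c))) ^ n * EE (gw c) n (fun d => G (ncons x d))) := by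
          rw [ih (fun d => G (ncons x d))]
          ring
      _ = (ENNReal.ofReal ((1 - c/lam) / (1 - c))) ^ (n+1) *
            (gw c x * EE (gw c) n (fun d => G (ncons x d))) := by
          rw [gw_tilt hc0 hc1 hlam]
          rw [pow_succ]
          ring

lemma EE_pow_sum {p lam : ℝ} (hp0 : 0 ≤ p) (hp1 : p ≤ 1) (hl : 0 ≤ lam) (hpl : p * lam < 1) :
    ∀ m : ℕ, EE (gw p) m (fun B => (ENNReal.ofReal lam) ^ (∑ i ∈ Finset.range m, B i))
      = (ENNReal.ofReal ((1 - p) / (1 - p * lam))) ^ m := by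
  intro m
  induction m with
  | zero => simp
  | succ m ih =>
    rw [EE_succ]
    calc (∑' x, gw p x * EE (gw p) m
            (fun d => (ENNReal.ofReal lam) ^ (∑ i ∈ Finset.range (m+1), ncons x d i)))
        = ∑' x, (gw p x * (ENNReal.ofReal lam) ^ x) * EE (gw p) m
            (fun d => (ENNReal.ofReal lam) ^ (∑ i ∈ Finset.range m, d i)) := by
          refine tsum_congr fun x => ?_
          rw [mul_assoc]
          congr 1
          rw [← EE_mul_left]
          exact EE_congr _ _ fun d => by rw [sum_range_ncons, pow_add]
      _ = (∑' x, gw p x * (ENNReal.ofReal lam) ^ x) *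
            (ENNReal.ofReal ((1 - p) / (1 - p * lam))) ^ m := by
          rw [ENNReal.tsum_mul_right, ih]
      _ = (ENNReal.ofReal ((1 - p) / (1 - p * lam))) ^ (m+1) := by
          rw [tsum_gw_mul_pow hp0 hp1 hl hpl, pow_succ]
          ring

lemma EE_dominance {q s : ℝ} (hq0 : 0 ≤ q) (hq1 : q < 1) (hqs : q ≤ s) (hs1 : s < 1) :
    ∀ (m : ℕ) (F : (ℕ → ℕ) → ℝ≥0∞),
    (∀ d d' : ℕ → ℕ, (∀ i, d i ≤ d' i) → F d ≤ F d') →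
    EE (gw q) m F ≤ EE (gw s) m F := by
  have hs0 : 0 ≤ s := le_trans hq0 hqs
  have htail : ∀ j : ℕ, ∑' k, (if j + 1 ≤ k then gw q k else 0)
      ≤ ∑' k, (if j + 1 ≤ k then gw s k else 0) := by
    intro j
    rw [tsum_gw_tail hq0 hq1, tsum_gw_tail hs0 hs1]
    exact ENNReal.ofReal_le_ofReal (pow_le_pow_left₀ hq0 hqs _)
  intro m
  induction m with
  | zero => intro F _; exact le_rfl
  | succ m ih =>
    intro F hF
    rw [EE_succ, EE_succ]
    calc (∑' x, gw q x * EE (gw q) m (fun d => F (ncons x d)))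
        ≤ ∑' x, gw q x * EE (gw s) m (fun d => F (ncons x d)) := by
          refine ENNReal.tsum_le_tsum fun x => mul_le_mul_right ?_ _
          exact ih _ fun d d' hdd => hF _ _ fun i => by cases i <;> simp [hdd _]
      _ ≤ ∑' x, gw s x * EE (gw s) m (fun d => F (ncons x d)) := by
          refine tsum_weight_mono (tsum_gw hq0 hq1) (tsum_gw hs0 hs1) htail _ ?_
          intro x x' hxx
          refine EE_mono _ _ fun d => hF _ _ fun i => ?_
          cases i <;> simp [hxx]

/-! ### The identity and the core bound -/

lemma core_identity {p c lam : ℝ} (hp0 : 0 < p) (hp1 : p < 1) (hc0 : 0 ≤ c) (hc1 : c < 1)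
    (hlam : 1 ≤ lam) (hpl : p * lam < 1) (m n : ℕ) :
    EE (gw (c/lam)) n (fun L => EEmat (gw (p*c)) m n (fun Om => EE (gw p) m
      (fun B => (ENNReal.ofReal lam) ^ bG L B Om m n)))
    = (ENNReal.ofReal ((1 - c/lam) / (1 - c))) ^ n
      * (ENNReal.ofReal ((1 - p) / (1 - p * lam))) ^ m := by
  calc EE (gw (c/lam)) n (fun L => EEmat (gw (p*c)) m n (fun Om => EE (gw p) m
        (fun B => (ENNReal.ofReal lam) ^ bG L B Om m n)))
      = EE (gw (c/lam)) n (fun L => (ENNReal.ofReal lam) ^ (∑ j ∈ Finset.range n, L j) *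
          EEmat (gw (p*c)) m n (fun Om => EE (gw p) m
            (fun B => (ENNReal.ofReal lam) ^ (∑ i ∈ Finset.range m, topI n L Om B i)))) := by
        refine EE_congr _ _ fun L => ?_
        rw [← EEmat_mul_left]
        refine EEmat_congr _ _ _ fun Om => ?_
        rw [← EE_mul_left]
        refine EE_congr _ _ fun B => ?_
        rw [bG_sum, pow_add]
    _ = (ENNReal.ofReal ((1 - c/lam) / (1 - c))) ^ n *
          EE (gw c) n (fun L => EEmat (gw (p*c)) m n (fun Om => EE (gw p) m
            (fun B => (ENNReal.ofReal lam) ^ (∑ i ∈ Finset.range m, topI n L Om B i)))) :=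
        EE_tilt hc0 hc1 hlam n _
    _ = (ENNReal.ofReal ((1 - c/lam) / (1 - c))) ^ n *
          EE (gw p) m (fun B => (ENNReal.ofReal lam) ^ (∑ i ∈ Finset.range m, B i)) := by
        rw [full_burke hp0.le hp1 hc0 hc1 rfl n m
          (fun I => (ENNReal.ofReal lam) ^ (∑ i ∈ Finset.range m, I i))]
    _ = _ := by rw [EE_pow_sum hp0.le hp1.le (le_trans zero_le_one hlam) hpl]

theorem core_bound {r q s lam : ℝ} (hr0 : 0 < r) (hrq : r ≤ q) (hq1 : q < 1)
    (hqs : q ≤ s) (hrs : r < s) (hlam : 1 ≤ lam) (hsl : s * lam < 1) (m n : ℕ) :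
    EE (gw q) m (fun B => EEmat (gw r) m n (fun Om =>
        (ENNReal.ofReal lam) ^ bG (fun _ => 0) B Om m n))
      ≤ ENNReal.ofReal (((1-s)/(1-lam*s))^m * ((1 - r/(lam*s))/(1 - r/s))^n) := by
  have hs0 : (0:ℝ) < s := lt_of_lt_of_le hr0 (le_trans hrq hqs)
  have hl0 : (0:ℝ) < lam := lt_of_lt_of_le one_pos hlam
  have hs1 : s < 1 := by nlinarith
  have hq0 : (0:ℝ) ≤ q := le_trans hr0.le hrq
  have hc0 : (0:ℝ) ≤ r/s := div_nonneg hr0.le hs0.le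
  have hc1 : r/s < 1 := (div_lt_one hs0).2 hrs
  have hcl0 : (0:ℝ) ≤ (r/s)/lam := div_nonneg hc0 hl0.le
  have hcl1 : (r/s)/lam < 1 := lt_of_le_of_lt (div_le_self hc0 hlam) hc1
  have ht1 : (1:ℝ≥0∞) ≤ ENNReal.ofReal lam := ENNReal.one_le_ofReal.2 hlam
  have powmono : ∀ {a b : ℕ}, a ≤ b → (ENNReal.ofReal lam)^a ≤ (ENNReal.ofReal lam)^b :=
    fun hab => pow_le_pow_right₀ ht1 hab
  calc EE (gw q) m (fun B => EEmat (gw r) m n (fun Om =>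
          (ENNReal.ofReal lam) ^ bG (fun _ => 0) B Om m n))
      ≤ EE (gw s) m (fun B => EEmat (gw r) m n (fun Om =>
          (ENNReal.ofReal lam) ^ bG (fun _ => 0) B Om m n)) := by
        refine EE_dominance hq0 hq1 hqs hs1 m _ ?_
        intro B B' h
        exact EEmat_mono _ _ _ fun Om => powmono (bG_mono_B h n m)
    _ ≤ EE (gw s) m (fun B => EEmat (gw r) m n (fun Om =>
          EE (gw ((r/s)/lam)) n (fun L => (ENNReal.ofReal lam) ^ bG L B Om m n))) := by
        refine EE_mono _ _ fun B => EEmat_mono _ _ _ fun Om => ?_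
        rw [← EE_const (gw ((r/s)/lam)) (tsum_gw hcl0 hcl1) n
          ((ENNReal.ofReal lam) ^ bG (fun _ => 0) B Om m n)]
        exact EE_mono _ _ fun L => powmono (bG_mono_L (fun k => Nat.zero_le _) n m)
    _ = EE (gw ((r/s)/lam)) n (fun L => EEmat (gw r) m n (fun Om =>
          EE (gw s) m (fun B => (ENNReal.ofReal lam) ^ bG L B Om m n))) := by
        calc EE (gw s) m (fun B => EEmat (gw r) m n (fun Om =>
                EE (gw ((r/s)/lam)) n (fun L => (ENNReal.ofReal lam) ^ bG L B Om m n)))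
            = EE (gw s) m (fun B => EE (gw ((r/s)/lam)) n (fun L =>
                EEmat (gw r) m n (fun Om => (ENNReal.ofReal lam) ^ bG L B Om m n))) := by
              refine EE_congr _ _ fun B => ?_
              exact EEmat_comm (EE (gw ((r/s)/lam)) n)
                (fun cc g => EE_mul_left _ _ _ _) (fun h => EE_tsum_comm _ _ _) _ _ _ _
          _ = EE (gw ((r/s)/lam)) n (fun L => EE (gw s) m (fun B =>
                EEmat (gw r) m n (fun Om => (ENNReal.ofReal lam) ^ bG L B Om m n))) :=
              EE_comm (EE (gw ((r/s)/lam)) n)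
                (fun cc g => EE_mul_left _ _ _ _) (fun h => EE_tsum_comm _ _ _) _ _ _
          _ = EE (gw ((r/s)/lam)) n (fun L => EEmat (gw r) m n (fun Om =>
                EE (gw s) m (fun B => (ENNReal.ofReal lam) ^ bG L B Om m n))) := by
              refine EE_congr _ _ fun L => ?_
              exact EE_comm (EEmat (gw r) m n)
                (fun cc g => EEmat_mul_left _ _ _ _ _) (fun h => EEmat_tsum_comm _ _ _ _) _ _ _
    _ = (ENNReal.ofReal ((1 - (r/s)/lam) / (1 - r/s))) ^ n
        * (ENNReal.ofReal ((1 - s) / (1 - s * lam))) ^ m := by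
        have hgr : gw r = gw (s * (r/s)) := by
          rw [mul_comm, div_mul_cancel₀ _ hs0.ne']
        rw [hgr]
        exact core_identity hs0 hs1 hc0 hc1 hlam hsl m n
    _ = ENNReal.ofReal (((1-s)/(1-lam*s))^m * ((1 - r/(lam*s))/(1 - r/s))^n) := by
        have n1 : (0:ℝ) ≤ (1 - (r/s)/lam) / (1 - r/s) := div_nonneg (by linarith) (by linarith)
        have n2 : (0:ℝ) ≤ (1 - s) / (1 - s * lam) := div_nonneg (by linarith) (by linarith)
        rw [← ENNReal.ofReal_pow n1, ← ENNReal.ofReal_pow n2,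
          ← ENNReal.ofReal_mul (pow_nonneg n1 _)]
        congr 1
        rw [div_div, mul_comm s lam]
        ring

end EJS


namespace EJS
open MeasureTheory ProbabilityTheory

section Sites
variable (m n : ℕ)

abbrev IdxT := (Fin m ⊕ Fin m × Fin n)
abbrev DT := (Fin m → ℕ) × (Fin n → Fin m → ℕ)

def sigmaSite : IdxT m n → Site
  | .inl i => (((i : ℕ) : ℤ) + 1, 0)
  | .inr (i, j) => (((i : ℕ) : ℤ) + 1, ((j : ℕ) : ℤ) + 1)

def valD (d : DT m n) : IdxT m n → ℕ
  | .inl i => d.1 i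
  | .inr (i, j) => d.2 j i

noncomputable def wpt (d : DT m n) : Site → ℝ :=
  fun v => ∑ u : IdxT m n, if sigmaSite m n u = v then (valD m n d u : ℝ) else 0

def extV {k : ℕ} (B : Fin k → ℕ) : ℕ → ℕ := fun i => if h : i < k then B ⟨i, h⟩ else 0

def extM (Om : Fin n → Fin m → ℕ) : ℕ → ℕ → ℕ :=
  fun j => if h : j < n then extV (Om ⟨j, h⟩) else fun _ => 0

lemma sigma_mem_HBd (u : IdxT m n) : sigmaSite m n u ∈ HBdSites := by
  rcases u with i | ⟨i, j⟩
  · right; constructor <;> simp [sigmaSite] <;> omega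
  · left; constructor <;> simp [sigmaSite] <;> omega

lemma sigma_injective : Function.Injective (sigmaSite m n) := by
  rintro (i | ⟨i, j⟩) (i' | ⟨i', j'⟩) h <;> simp only [sigmaSite, Prod.mk.injEq] at h
  · obtain ⟨h1, -⟩ := h
    have : (i : ℕ) = (i' : ℕ) := by exact_mod_cast (by omega : ((i:ℕ):ℤ) = ((i':ℕ):ℤ))
    simp [Fin.ext_iff, this]
  · omega
  · omega
  · obtain ⟨h1, h2⟩ := h
    have e1 : (i : ℕ) = (i' : ℕ) := by exact_mod_cast (by omega : ((i:ℕ):ℤ) = ((i':ℕ):ℤ))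
    have e2 : (j : ℕ) = (j' : ℕ) := by exact_mod_cast (by omega : ((j:ℕ):ℤ) = ((j':ℕ):ℤ))
    simp [Prod.ext_iff, Fin.ext_iff, e1, e2]

lemma wpt_sigma (d : DT m n) (u : IdxT m n) :
    wpt m n d (sigmaSite m n u) = (valD m n d u : ℝ) := by
  rw [wpt, Finset.sum_eq_single u]
  · simp
  · intro u' _ hne
    have : sigmaSite m n u' ≠ sigmaSite m n u := fun hc => hne (sigma_injective m n hc)
    simp [this]
  · simp

lemma wpt_bottom (d : DT m n) (k : ℕ) (hk : k < m) :
    wpt m n d ((k : ℤ) + 1, 0) = ((extV d.1 k : ℕ) : ℝ) := by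
  have := wpt_sigma m n d (.inl ⟨k, hk⟩)
  simp only [sigmaSite, valD] at this
  rw [this]
  simp [extV, hk]

lemma wpt_bulk (d : DT m n) (k l : ℕ) (hk : k < m) (hl : l < n) :
    wpt m n d ((k : ℤ) + 1, (l : ℤ) + 1) = ((extM m n d.2 l k : ℕ) : ℝ) := by
  have := wpt_sigma m n d (.inr (⟨k, hk⟩, ⟨l, hl⟩))
  simp only [sigmaSite, valD] at this
  rw [this]
  simp [extM, extV, hk, hl]

end Sites

/-! ### up-right paths stay in the box -/

lemma upright_step {π : ℕ → Site} {ℓ : ℕ} (h : IsUpRight π ℓ) {i : ℕ} (hi : i < ℓ) :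
    (π i).1 ≤ (π (i+1)).1 ∧ (π i).2 ≤ (π (i+1)).2 ∧ (π (i+1)).1 + (π (i+1)).2 = (π i).1 + (π i).2 + 1 := by
  rcases h i hi with hh | hh <;> rw [hh] <;> simp [e1, e2, Prod.fst_add, Prod.snd_add] <;> omega

lemma upright_mono {π : ℕ → Site} {ℓ : ℕ} (h : IsUpRight π ℓ) :
    ∀ k k', k ≤ k' → k' ≤ ℓ → (π k).1 ≤ (π k').1 ∧ (π k).2 ≤ (π k').2 := by
  intro k k' hkk hk'
  induction k' with
  | zero =>
    have : k = 0 := by omega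
    subst this; exact ⟨le_rfl, le_rfl⟩
  | succ k' ih =>
    rcases Nat.eq_or_lt_of_le hkk with rfl | hlt
    · exact ⟨le_rfl, le_rfl⟩
    · have h1 := ih (by omega) (by omega)
      have h2 := upright_step h (show k' < ℓ by omega)
      exact ⟨le_trans h1.1 h2.1, le_trans h1.2 h2.2.1⟩

/-- coordinates of path points between `(j,1)` and `(m,n)`. -/
lemma upright_box {π : ℕ → Site} {ℓ : ℕ} {j : ℤ} {m n : ℕ} (h : IsUpRight π ℓ)
    (h0 : π 0 = (j, 1)) (hend : π ℓ = ((m : ℤ), (n : ℤ))) :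
    ∀ k ≤ ℓ, j ≤ (π k).1 ∧ (π k).1 ≤ m ∧ 1 ≤ (π k).2 ∧ (π k).2 ≤ n := by
  intro k hk
  have hlow := upright_mono h 0 k (Nat.zero_le _) hk
  have hhigh := upright_mono h k ℓ hk le_rfl
  rw [h0] at hlow
  rw [hend] at hhigh
  exact ⟨hlow.1, hhigh.1, hlow.2, hhigh.2⟩
end EJS

namespace EJS
open MeasureTheory

lemma bG_le_right (L B : ℕ → ℕ) (Om : ℕ → ℕ → ℕ) (i : ℕ) : ∀ j, bG L B Om i 0 ≤ bG L B Om i j := by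
  intro j
  induction j with
  | zero => exact le_rfl
  | succ j ih => exact le_trans ih (bG_mono_right L B Om i j)

lemma sumIccZ (f : ℤ → ℝ) : ∀ jn : ℕ, ∑ i ∈ Finset.Icc (1:ℤ) (jn:ℤ), f i
    = ∑ k ∈ Finset.range jn, f ((k:ℤ)+1) := by
  intro jn
  induction jn with
  | zero =>
    rw [Finset.Icc_eq_empty (by norm_num)]
    simp
  | succ jn ih =>
    have hins : Finset.Icc (1:ℤ) ((jn:ℤ)+1) = insert ((jn:ℤ)+1) (Finset.Icc (1:ℤ) (jn:ℤ)) := by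
      ext x
      simp only [Finset.mem_Icc, Finset.mem_insert]
      omega
    have hnm : ((jn:ℤ)+1) ∉ Finset.Icc (1:ℤ) (jn:ℤ) := by
      simp only [Finset.mem_Icc]; omega
    rw [show (((jn+1 : ℕ)):ℤ) = (jn:ℤ)+1 by push_cast; ring, hins, Finset.sum_insert hnm, ih,
      Finset.sum_range_succ]
    ring

section Bound
variable (m n : ℕ)

lemma Gq10_le_bG (hm : 1 ≤ m) (hn : 1 ≤ n) (d : DT m n) :
    Gq10 (wpt m n d) (m : ℤ) (n : ℤ)
      ≤ ((bG (fun _ => 0) (extV d.1) (extM m n d.2) m n : ℕ) : ℝ) := by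
  set B' := extV d.1 with hB'
  set Om' := extM m n d.2 with hOm'
  set N := bG (fun _ => 0) B' Om' m n with hN
  apply Real.sSup_le
  · rintro w ⟨j, hj, rfl⟩
    rw [Finset.mem_Icc] at hj
    set jn := j.toNat with hjn
    have hj1 : 1 ≤ jn := by omega
    have hjm : jn ≤ m := by omega
    have hjZ : (jn : ℤ) = j := by omega
    set SB := ∑ k ∈ Finset.range jn, B' k with hSB
    have hsum : ∑ i ∈ Finset.Icc (1:ℤ) j, wpt m n d (i, 0) = ((SB : ℕ) : ℝ) := by
      rw [← hjZ, sumIccZ, hSB, Nat.cast_sum]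
      refine Finset.sum_congr rfl fun k hk => ?_
      rw [Finset.mem_range] at hk
      exact wpt_bottom m n d k (by omega)
    have hSBN : SB ≤ N := by
      calc SB ≤ ∑ k ∈ Finset.range m, B' k :=
            Finset.sum_le_sum_of_subset (Finset.range_subset_range.2 hjm)
        _ = bG (fun _ => 0) B' Om' m 0 := (bG_zero_right _ _ _ _).symm
        _ ≤ N := bG_le_right _ _ _ _ _
    have hlpp : lppG (wpt m n d) (j, 1) ((m:ℤ), (n:ℤ)) ≤ ((N : ℕ) : ℝ) - ((SB : ℕ) : ℝ) := by
      apply Real.sSup_le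
      · rintro w ⟨ℓ, π, hup, h0, hend, rfl⟩
        have hbox := upright_box hup h0 hend
        have key : ∀ k, k ≤ ℓ → ((SB : ℕ) : ℝ) + pathWeight (wpt m n d) π k
            ≤ ((bG (fun _ => 0) B' Om' ((π k).1.toNat) ((π k).2.toNat) : ℕ) : ℝ) := by
          intro k
          induction k with
          | zero =>
            intro _
            have hpw0 : pathWeight (wpt m n d) π 0 = wpt m n d (π 0) := by
              simp [pathWeight]
            have hcoord : π 0 = (((jn - 1 : ℕ) : ℤ) + 1, ((0 : ℕ) : ℤ) + 1) := by
              rw [h0]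
              have hca : ((jn - 1 : ℕ) : ℤ) + 1 = j := by omega
              rw [hca]
              norm_num
            have hval : wpt m n d (π 0) = ((Om' 0 (jn - 1) : ℕ) : ℝ) := by
              rw [hcoord, wpt_bulk m n d (jn-1) 0 (by omega) (by omega)]
            have hnat : SB + Om' 0 (jn - 1) ≤ bG (fun _ => 0) B' Om' jn 1 := by
              have h1 := bG_succ_succ (fun _ => 0) B' Om' (jn-1) 0
              have h2 := bG_zero_right (fun _ => 0) B' Om' ((jn-1)+1)
              have h3 : (jn-1)+1 = jn := by omega
              rw [h3] at h1 h2
              rw [← hSB] at h2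
              simp only [Nat.zero_add] at h1
              have h4 := le_max_right (bG (fun _ => 0) B' Om' (jn-1) 1)
                (bG (fun _ => 0) B' Om' jn 0)
              omega
            have hc1 : (π 0).1.toNat = jn := by rw [h0]
            have hc2 : (π 0).2.toNat = 1 := by rw [h0]; rfl
            rw [hpw0, hval, hc1, hc2]
            exact_mod_cast hnat
          | succ k ih =>
            intro hk1
            have ihk := ih (by omega)
            have hboxk := hbox k (by omega)
            have hboxk1 := hbox (k+1) (by omega)
            have hpw : pathWeight (wpt m n d) π (k+1)
                = pathWeight (wpt m n d) π k + wpt m n d (π (k+1)) := by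
              rw [pathWeight, Finset.sum_range_succ]; rfl
            set a := (π (k+1)).1 with ha
            set b := (π (k+1)).2 with hb
            set at' := a.toNat with hat
            set bt := b.toNat with hbt
            have ha1 : 1 ≤ a := le_trans hj.1 hboxk1.1
            have hb1 : 1 ≤ b := hboxk1.2.2.1
            have hat1 : 1 ≤ at' := by omega
            have hbt1 : 1 ≤ bt := by omega
            have hatm : at' ≤ m := by omega
            have hbtn : bt ≤ n := by omega
            have hπ : π (k+1) = (((at' - 1 : ℕ) : ℤ) + 1, ((bt - 1 : ℕ) : ℤ) + 1) := by
              have ca : ((at' - 1 : ℕ) : ℤ) + 1 = a := by omega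
              have cb : ((bt - 1 : ℕ) : ℤ) + 1 = b := by omega
              rw [ca, cb, ha, hb]
            have hval : wpt m n d (π (k+1)) = ((Om' (bt-1) (at'-1) : ℕ) : ℝ) := by
              rw [hπ, wpt_bulk m n d (at'-1) (bt-1) (by omega) (by omega)]
            rcases hup k (by omega) with hh | hh
            · -- horizontal step
              have hc1 : a = (π k).1 + 1 := by rw [ha, hh]; simp [e1]
              have hc2 : b = (π k).2 := by rw [hb, hh]; simp [e1]
              have hA : (π k).1.toNat = at' - 1 := by omega
              have hB2 : (π k).2.toNat = bt := by omega
              have hnat : bG (fun _ => 0) B' Om' (at'-1) bt + Om' (bt-1) (at'-1)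
                  ≤ bG (fun _ => 0) B' Om' at' bt := by
                have h1 := bG_succ_succ (fun _ => 0) B' Om' (at'-1) (bt-1)
                have h3 : (at'-1)+1 = at' := by omega
                have h4 : (bt-1)+1 = bt := by omega
                rw [h3, h4] at h1
                have h5 := le_max_left (bG (fun _ => 0) B' Om' (at'-1) bt)
                  (bG (fun _ => 0) B' Om' at' (bt-1))
                omega
              rw [hA, hB2] at ihk
              have hcast : ((bG (fun _ => 0) B' Om' (at'-1) bt : ℕ):ℝ)
                    + ((Om' (bt-1) (at'-1) : ℕ):ℝ)
                  ≤ ((bG (fun _ => 0) B' Om' at' bt : ℕ):ℝ) := by exact_mod_cast hnat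
              rw [hpw, hval]
              linarith
            · -- vertical step
              have hc1 : a = (π k).1 := by rw [ha, hh]; simp [e2]
              have hc2 : b = (π k).2 + 1 := by rw [hb, hh]; simp [e2]
              have hA : (π k).1.toNat = at' := by omega
              have hB2 : (π k).2.toNat = bt - 1 := by omega
              have hnat : bG (fun _ => 0) B' Om' at' (bt-1) + Om' (bt-1) (at'-1)
                  ≤ bG (fun _ => 0) B' Om' at' bt := by
                have h1 := bG_succ_succ (fun _ => 0) B' Om' (at'-1) (bt-1)
                have h3 : (at'-1)+1 = at' := by omega
                have h4 : (bt-1)+1 = bt := by omega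
                rw [h3, h4] at h1
                have h5 := le_max_right (bG (fun _ => 0) B' Om' (at'-1) bt)
                  (bG (fun _ => 0) B' Om' at' (bt-1))
                omega
              rw [hA, hB2] at ihk
              have hcast : ((bG (fun _ => 0) B' Om' at' (bt-1) : ℕ):ℝ)
                    + ((Om' (bt-1) (at'-1) : ℕ):ℝ)
                  ≤ ((bG (fun _ => 0) B' Om' at' bt : ℕ):ℝ) := by exact_mod_cast hnat
              rw [hpw, hval]
              linarith
        have hfin := key ℓ le_rfl
        rw [hend] at hfin
        simp only [Int.toNat_natCast] at hfin
        linarith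
      · have : SB ≤ N := hSBN
        have h2 : ((SB:ℕ):ℝ) ≤ ((N:ℕ):ℝ) := by exact_mod_cast this
        linarith
    rw [hsum]
    linarith
  · positivity

end Bound
end EJS

namespace EJS
open MeasureTheory ProbabilityTheory

section Congr
variable (m n : ℕ)

lemma sigma_surj_box (v : Site) (h1 : 1 ≤ v.1) (h2 : v.1 ≤ (m:ℤ))
    (h3 : v.2 = 0 ∨ (1 ≤ v.2 ∧ v.2 ≤ (n:ℤ))) : ∃ u : IdxT m n, sigmaSite m n u = v := by
  obtain ⟨x, y⟩ := v
  simp only at h1 h2 h3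
  rcases h3 with h3 | h3
  · refine ⟨.inl ⟨(x - 1).toNat, by omega⟩, ?_⟩
    simp only [sigmaSite, Prod.mk.injEq]
    omega
  · refine ⟨.inr (⟨(x - 1).toNat, by omega⟩, ⟨(y - 1).toNat, by omega⟩), ?_⟩
    simp only [sigmaSite, Prod.mk.injEq]
    omega

lemma Gq10_congr {ω ω' : Site → ℝ}
    (h : ∀ u : IdxT m n, ω (sigmaSite m n u) = ω' (sigmaSite m n u)) :
    Gq10 ω (m:ℤ) (n:ℤ) = Gq10 ω' (m:ℤ) (n:ℤ) := by
  have hbox : ∀ v : Site, 1 ≤ v.1 → v.1 ≤ (m:ℤ) → (v.2 = 0 ∨ (1 ≤ v.2 ∧ v.2 ≤ (n:ℤ))) →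
      ω v = ω' v := by
    intro v h1 h2 h3
    obtain ⟨u, rfl⟩ := sigma_surj_box m n v h1 h2 h3
    exact h u
  have hpw : ∀ (j : ℤ), 1 ≤ j → ∀ (ℓ : ℕ) (π : ℕ → Site), IsUpRight π ℓ →
      π 0 = (j,1) → π ℓ = ((m:ℤ),(n:ℤ)) → pathWeight ω π ℓ = pathWeight ω' π ℓ := by
    intro j hj1 ℓ π hup h0 hend
    simp only [pathWeight]
    refine Finset.sum_congr rfl fun i hi => ?_
    rw [Finset.mem_range] at hi
    have hb := upright_box hup h0 hend i (by omega)
    exact hbox _ (le_trans hj1 hb.1) hb.2.1 (Or.inr ⟨hb.2.2.1, hb.2.2.2⟩)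
  have hlpp : ∀ j : ℤ, 1 ≤ j →
      lppG ω (j,1) ((m:ℤ),(n:ℤ)) = lppG ω' (j,1) ((m:ℤ),(n:ℤ)) := by
    intro j hj1
    unfold lppG
    congr 1
    ext w
    constructor
    · rintro ⟨ℓ, π, hup, h0, hend, rfl⟩
      exact ⟨ℓ, π, hup, h0, hend, hpw j hj1 ℓ π hup h0 hend⟩
    · rintro ⟨ℓ, π, hup, h0, hend, rfl⟩
      exact ⟨ℓ, π, hup, h0, hend, (hpw j hj1 ℓ π hup h0 hend).symm⟩
  have hsum : ∀ j : ℤ, 1 ≤ j → j ≤ (m:ℤ) →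
      ∑ i ∈ Finset.Icc (1:ℤ) j, ω (i,0) = ∑ i ∈ Finset.Icc (1:ℤ) j, ω' (i,0) := by
    intro j hj1 hjm
    refine Finset.sum_congr rfl fun i hi => ?_
    rw [Finset.mem_Icc] at hi
    exact hbox _ hi.1 (le_trans hi.2 hjm) (Or.inl rfl)
  unfold Gq10
  congr 1
  ext w
  constructor
  · rintro ⟨j, hj, rfl⟩
    have hj' := Finset.mem_Icc.1 hj
    exact ⟨j, hj, by rw [hsum j hj'.1 hj'.2, hlpp j hj'.1]⟩
  · rintro ⟨j, hj, rfl⟩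
    have hj' := Finset.mem_Icc.1 hj
    exact ⟨j, hj, by rw [hsum j hj'.1 hj'.2, hlpp j hj'.1]⟩

end Congr

section Measures

lemma geomMeasure_singleton (α : ℝ) (k : ℕ) : geomMeasure α {((k:ℕ):ℝ)} = gw α k := by
  rw [geomMeasure, Measure.sum_apply _ (measurableSet_singleton _)]
  rw [tsum_eq_single k]
  · rw [Measure.smul_apply, smul_eq_mul, Measure.dirac_apply' _ (measurableSet_singleton _)]
    simp [Set.indicator, gw, mul_comm]
  · intro j hj
    rw [Measure.smul_apply, smul_eq_mul, Measure.dirac_apply' _ (measurableSet_singleton _)]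
    have : ((j:ℕ):ℝ) ≠ ((k:ℕ):ℝ) := by exact_mod_cast hj
    simp [Set.indicator, this]

lemma geomMeasure_compl_range (α : ℝ) :
    geomMeasure α (Set.range (fun k : ℕ => ((k:ℕ):ℝ)))ᶜ = 0 := by
  rw [geomMeasure, Measure.sum_apply _ (((Set.countable_range _).measurableSet).compl)]
  rw [ENNReal.tsum_eq_zero]
  intro j
  rw [Measure.smul_apply, smul_eq_mul, Measure.dirac_apply' _ (((Set.countable_range _).measurableSet).compl)]
  have : ((j:ℕ):ℝ) ∈ Set.range (fun k : ℕ => ((k:ℕ):ℝ)) := ⟨j, rfl⟩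
  simp [Set.indicator, this]

variable (m n : ℕ)
variable {P : Measure (Site → ℝ)} [IsProbabilityMeasure P]

lemma indep_prod
    (hindep : iIndepFun (m := fun _ : HBdSites => (inferInstance : MeasurableSpace ℝ))
      (fun v (ω : Site → ℝ) => ω v.val) P)
    (sets : IdxT m n → Set ℝ) (hsets : ∀ u, MeasurableSet (sets u)) :
    P (⋂ u : IdxT m n, {ω | ω (sigmaSite m n u) ∈ sets u})
      = ∏ u : IdxT m n, P {ω | ω (sigmaSite m n u) ∈ sets u} := by
  classical
  set g : IdxT m n → ↥HBdSites := fun u => ⟨sigmaSite m n u, sigma_mem_HBd m n u⟩ with hg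
  have hginj : Function.Injective g := by
    intro u u' h
    exact sigma_injective m n (congrArg Subtype.val h)
  set S : Finset ↥HBdSites := Finset.image g Finset.univ with hS
  set sets' : ↥HBdSites → Set ℝ := Function.extend g sets (fun _ => Set.univ) with hsets'
  have hsets'm : ∀ v ∈ S, MeasurableSet (sets' v) := by
    intro v hv
    rcases Finset.mem_image.1 hv with ⟨u, -, rfl⟩
    rw [hsets', hginj.extend_apply]
    exact hsets u
  have key := hindep.measure_inter_preimage_eq_mul S hsets'm
  have hiInter : (⋂ v ∈ S, (fun ω : Site → ℝ => ω v.val) ⁻¹' sets' v)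
      = ⋂ u : IdxT m n, {ω | ω (sigmaSite m n u) ∈ sets u} := by
    ext ω
    simp only [Set.mem_iInter, Set.mem_preimage, Set.mem_setOf_eq]
    constructor
    · intro hh u
      have := hh (g u) (Finset.mem_image.2 ⟨u, Finset.mem_univ u, rfl⟩)
      rwa [hsets', hginj.extend_apply] at this
    · intro hh v hv
      rcases Finset.mem_image.1 hv with ⟨u, -, rfl⟩
      rw [hsets', hginj.extend_apply]
      exact hh u
  have hprod : ∏ v ∈ S, P ((fun ω : Site → ℝ => ω v.val) ⁻¹' sets' v)
      = ∏ u : IdxT m n, P {ω | ω (sigmaSite m n u) ∈ sets u} := by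
    rw [hS, Finset.prod_image (fun u _ u' _ h => hginj h)]
    refine Finset.prod_congr rfl fun u _ => ?_
    rw [hsets', hginj.extend_apply]
    rfl
  rw [hiInter] at key
  rw [hprod] at key
  exact key

end Measures
end EJS

namespace EJS
open MeasureTheory ProbabilityTheory

section Bridge
variable (m n : ℕ) {q r : ℝ}
variable {P : Measure (Site → ℝ)} [IsProbabilityMeasure P]

/-- marginal singleton masses -/
lemma marg_single
    (hbulk : ∀ i j : ℤ, 1 ≤ i → 1 ≤ j → P.map (fun ω => ω (i, j)) = geomMeasure r)
    (hI : ∀ i : ℤ, 1 ≤ i → P.map (fun ω => ω (i, 0)) = geomMeasure q)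
    (u : IdxT m n) (k : ℕ) :
    P {ω | ω (sigmaSite m n u) = ((k:ℕ):ℝ)}
      = Sum.elim (fun _ => gw q k) (fun _ => gw r k) u := by
  have hmap : ∀ v : Site, P {ω | ω v = ((k:ℕ):ℝ)}
      = (P.map (fun ω => ω v)) {((k:ℕ):ℝ)} := by
    intro v
    rw [Measure.map_apply (measurable_pi_apply v) (measurableSet_singleton _)]
    rfl
  rcases u with i | ⟨i, j⟩
  · rw [hmap]
    simp only [sigmaSite]
    rw [hI _ (by omega : (1:ℤ) ≤ ((i:ℕ):ℤ)+1), geomMeasure_singleton]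
    rfl
  · rw [hmap]
    simp only [sigmaSite]
    rw [hbulk _ _ (by omega : (1:ℤ) ≤ ((i:ℕ):ℤ)+1) (by omega : (1:ℤ) ≤ ((j:ℕ):ℤ)+1),
      geomMeasure_singleton]
    rfl

lemma marg_range
    (hbulk : ∀ i j : ℤ, 1 ≤ i → 1 ≤ j → P.map (fun ω => ω (i, j)) = geomMeasure r)
    (hI : ∀ i : ℤ, 1 ≤ i → P.map (fun ω => ω (i, 0)) = geomMeasure q)
    (u : IdxT m n) :
    P {ω | ¬ ∃ k : ℕ, ω (sigmaSite m n u) = ((k:ℕ):ℝ)} = 0 := by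
  have hset : ∀ v : Site, {ω : Site → ℝ | ¬ ∃ k : ℕ, ω v = ((k:ℕ):ℝ)}
      = (fun ω : Site → ℝ => ω v) ⁻¹' (Set.range (fun k : ℕ => ((k:ℕ):ℝ)))ᶜ := by
    intro v
    ext ω
    simp [Set.mem_preimage, Set.mem_compl_iff, Set.mem_range, eq_comm]
  have hmap : ∀ v : Site, P ((fun ω : Site → ℝ => ω v) ⁻¹' (Set.range (fun k : ℕ => ((k:ℕ):ℝ)))ᶜ)
      = (P.map (fun ω => ω v)) (Set.range (fun k : ℕ => ((k:ℕ):ℝ)))ᶜ := by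
    intro v
    rw [Measure.map_apply (measurable_pi_apply v) ((Set.countable_range _).measurableSet.compl)]
  rcases u with i | ⟨i, j⟩
  · rw [hset, hmap]
    simp only [sigmaSite]
    rw [hI _ (by omega : (1:ℤ) ≤ ((i:ℕ):ℤ)+1), geomMeasure_compl_range]
  · rw [hset, hmap]
    simp only [sigmaSite]
    rw [hbulk _ _ (by omega : (1:ℤ) ≤ ((i:ℕ):ℤ)+1) (by omega : (1:ℤ) ≤ ((j:ℕ):ℤ)+1),
      geomMeasure_compl_range]

/-- the atom of a configuration -/
def atom (d : DT m n) : Set (Site → ℝ) :=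
  ⋂ u : IdxT m n, {ω | ω (sigmaSite m n u) = ((valD m n d u : ℕ):ℝ)}

lemma atom_measurable (d : DT m n) : MeasurableSet (atom m n d) := by
  refine MeasurableSet.iInter fun u => ?_
  exact (measurable_pi_apply (sigmaSite m n u)) (measurableSet_singleton _)

lemma atom_mass
    (hindep : iIndepFun (m := fun _ : HBdSites => (inferInstance : MeasurableSpace ℝ))
      (fun v (ω : Site → ℝ) => ω v.val) P)
    (hbulk : ∀ i j : ℤ, 1 ≤ i → 1 ≤ j → P.map (fun ω => ω (i, j)) = geomMeasure r)
    (hI : ∀ i : ℤ, 1 ≤ i → P.map (fun ω => ω (i, 0)) = geomMeasure q)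
    (d : DT m n) :
    P (atom m n d) = (∏ i, gw q (d.1 i)) * ∏ j, ∏ i, gw r (d.2 j i) := by
  have h1 : P (atom m n d) = ∏ u : IdxT m n, P {ω | ω (sigmaSite m n u) = ((valD m n d u : ℕ):ℝ)} := by
    have := indep_prod m n hindep (fun u => {((valD m n d u : ℕ):ℝ)})
      (fun u => measurableSet_singleton _)
    exact this
  rw [h1]
  have h2 : ∀ u : IdxT m n, P {ω | ω (sigmaSite m n u) = ((valD m n d u : ℕ):ℝ)}
      = Sum.elim (fun _ : Fin m => gw q (valD m n d u)) (fun _ : Fin m × Fin n => gw r (valD m n d u)) u :=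
    fun u => marg_single m n hbulk hI u (valD m n d u)
  calc ∏ u : IdxT m n, P {ω | ω (sigmaSite m n u) = ((valD m n d u : ℕ):ℝ)}
      = ∏ u : IdxT m n, Sum.elim (fun _ : Fin m => gw q (valD m n d u))
          (fun _ : Fin m × Fin n => gw r (valD m n d u)) u :=
        Finset.prod_congr rfl (fun u _ => h2 u)
    _ = (∏ i, gw q (d.1 i)) * ∏ p : Fin m × Fin n, gw r (d.2 p.2 p.1) := by
        rw [Fintype.prod_sum_type]
        rfl
    _ = (∏ i, gw q (d.1 i)) * ∏ j, ∏ i, gw r (d.2 j i) := by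
        congr 1
        rw [Fintype.prod_prod_type]
        exact Finset.prod_comm

lemma atom_disjoint : Pairwise (Function.onFun Disjoint (atom m n)) := by
  intro d d' hne
  rw [Function.onFun, Set.disjoint_left]
  intro ω hd hd'
  apply hne
  have hval : ∀ u, valD m n d u = valD m n d' u := by
    intro u
    have h1 := Set.mem_iInter.1 hd u
    have h2 := Set.mem_iInter.1 hd' u
    simp only [Set.mem_setOf_eq] at h1 h2
    exact_mod_cast h1.symm.trans h2
  obtain ⟨d1, d2⟩ := d
  obtain ⟨d1', d2'⟩ := d'
  simp only [Prod.mk.injEq]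
  constructor
  · funext i; exact hval (.inl i)
  · funext j i; exact hval (.inr (i, j))

lemma atoms_cover
    (hbulk : ∀ i j : ℤ, 1 ≤ i → 1 ≤ j → P.map (fun ω => ω (i, j)) = geomMeasure r)
    (hI : ∀ i : ℤ, 1 ≤ i → P.map (fun ω => ω (i, 0)) = geomMeasure q) :
    P (⋃ d : DT m n, atom m n d)ᶜ = 0 := by
  classical
  set U : Set (Site → ℝ) := ⋂ u : IdxT m n, {ω | ∃ k : ℕ, ω (sigmaSite m n u) = ((k:ℕ):ℝ)} with hU
  have hUS : U ⊆ ⋃ d : DT m n, atom m n d := by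
    intro ω hω
    rw [Set.mem_iInter] at hω
    refine Set.mem_iUnion.2 ⟨(fun i => Classical.choose (hω (.inl i)),
      fun j i => Classical.choose (hω (.inr (i, j)))), ?_⟩
    rw [atom, Set.mem_iInter]
    rintro (i | ⟨i, j⟩)
    · exact Classical.choose_spec (hω (.inl i))
    · exact Classical.choose_spec (hω (.inr (i, j)))
  have hUc : P Uᶜ = 0 := by
    rw [hU, Set.compl_iInter]
    refine le_antisymm (le_trans (measure_iUnion_le _) ?_) zero_le
    have hz : ∀ u : IdxT m n, P ({ω : Site → ℝ | ∃ k : ℕ, ω (sigmaSite m n u) = ((k:ℕ):ℝ)}ᶜ) = 0 := by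
      intro u
      exact marg_range m n hbulk hI u
    rw [tsum_congr hz]
    simp
  exact le_antisymm (le_trans (measure_mono (Set.compl_subset_compl.2 hUS)) hUc.le) zero_le

lemma bridge
    (hindep : iIndepFun (m := fun _ : HBdSites => (inferInstance : MeasurableSpace ℝ))
      (fun v (ω : Site → ℝ) => ω v.val) P)
    (hbulk : ∀ i j : ℤ, 1 ≤ i → 1 ≤ j → P.map (fun ω => ω (i, j)) = geomMeasure r)
    (hI : ∀ i : ℤ, 1 ≤ i → P.map (fun ω => ω (i, 0)) = geomMeasure q)
    (F : (Site → ℝ) → ℝ≥0∞)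
    (hF : ∀ (ω ω' : Site → ℝ),
      (∀ u : IdxT m n, ω (sigmaSite m n u) = ω' (sigmaSite m n u)) → F ω = F ω') :
    ∫⁻ ω, F ω ∂P
      = ∑' d : DT m n,
          ((∏ i, gw q (d.1 i)) * ∏ j, ∏ i, gw r (d.2 j i)) * F (wpt m n d) := by
  classical
  set S : Set (Site → ℝ) := ⋃ d : DT m n, atom m n d with hSdef
  have hSmeas : MeasurableSet S := MeasurableSet.iUnion fun d => atom_measurable m n d
  have hcompl : P Sᶜ = 0 := atoms_cover m n hbulk hI
  have hsplit : ∫⁻ ω, F ω ∂P = ∫⁻ ω in S, F ω ∂P := by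
    rw [← lintegral_add_compl F hSmeas]
    rw [setLIntegral_measure_zero _ _ hcompl, add_zero]
  rw [hsplit, hSdef, Measure.restrict_iUnion (atom_disjoint m n) (fun d => atom_measurable m n d),
    lintegral_sum_measure]
  refine tsum_congr fun d => ?_
  have hconst : ∀ᵐ ω ∂(P.restrict (atom m n d)), F ω = F (wpt m n d) := by
    filter_upwards [ae_restrict_mem (atom_measurable m n d)] with ω hω
    refine hF ω (wpt m n d) fun u => ?_
    have h1 := Set.mem_iInter.1 hω u
    simp only [Set.mem_setOf_eq] at h1
    rw [h1, wpt_sigma]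
  rw [lintegral_congr_ae hconst, lintegral_const, Measure.restrict_apply_univ,
    atom_mass m n hindep hbulk hI d, mul_comm]

end Bridge
end EJS

namespace EJS
open scoped ENNReal

lemma extV_zero (B : Fin 0 → ℕ) : extV B = fun _ => 0 := by
  funext i; simp [extV]

lemma extV_cons {k : ℕ} (x : ℕ) (B : Fin k → ℕ) :
    extV (Fin.cons x B) = ncons x (extV B) := by
  funext i
  cases i with
  | zero => simp [extV, ncons]
  | succ i =>
    show extV (Fin.cons x B) (i+1) = extV B i
    simp only [extV]
    by_cases h : i < k
    · rw [dif_pos (show i+1 < k+1 by omega), dif_pos h]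
      have he : (⟨i+1, show i+1 < k+1 by omega⟩ : Fin (k+1)) = Fin.succ ⟨i, h⟩ := rfl
      rw [he, Fin.cons_succ]
    · rw [dif_neg (by omega), dif_neg h]

lemma fin_split (w : ℕ → ℝ≥0∞) : ∀ (k : ℕ) (h : (ℕ → ℕ) → ℝ≥0∞),
    ∑' B : Fin k → ℕ, (∏ i, w (B i)) * h (extV B) = EE w k h := by
  intro k
  induction k with
  | zero =>
    intro h
    have huniq : ∀ B : Fin 0 → ℕ, B = (fun i => i.elim0) := fun B => funext fun i => i.elim0
    rw [tsum_eq_single (fun i : Fin 0 => i.elim0) (fun b hb => absurd (huniq b) hb)]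
    rw [extV_zero]
    simp
  | succ k ih =>
    intro h
    rw [← Equiv.tsum_eq (Fin.consEquiv (fun _ : Fin (k+1) => ℕ)), ENNReal.tsum_prod', EE_succ]
    refine tsum_congr fun x => ?_
    calc (∑' B' : Fin k → ℕ, (∏ i, w (((Fin.consEquiv (fun _ : Fin (k+1) => ℕ)) (x, B')) i))
            * h (extV ((Fin.consEquiv (fun _ : Fin (k+1) => ℕ)) (x, B'))))
        = ∑' B' : Fin k → ℕ, w x * ((∏ i, w (B' i)) * h (ncons x (extV B'))) := by
          refine tsum_congr fun B' => ?_
          have he : (Fin.consEquiv (fun _ : Fin (k+1) => ℕ)) (x, B') = Fin.cons x B' := rfl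
          rw [he, extV_cons, Fin.prod_univ_succ]
          simp only [Fin.cons_zero, Fin.cons_succ]
          ring
      _ = w x * EE w k (fun dd => h (ncons x dd)) := by
          rw [ENNReal.tsum_mul_left, ih (fun dd => h (ncons x dd))]

lemma extM_zero (m : ℕ) (Om : Fin 0 → Fin m → ℕ) : extM m 0 Om = fun _ _ => 0 := by
  funext j i; simp [extM]

lemma extM_cons (m n : ℕ) (row : Fin m → ℕ) (Om : Fin n → Fin m → ℕ) :
    extM m (n+1) (Fin.cons row Om) = ncons (extV row) (extM m n Om) := by
  funext j
  cases j with
  | zero => simp [extM, ncons]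
  | succ j =>
    show extM m (n+1) (Fin.cons row Om) (j+1) = extM m n Om j
    simp only [extM]
    by_cases h : j < n
    · rw [dif_pos (show j+1 < n+1 by omega), dif_pos h]
      have he : (⟨j+1, show j+1 < n+1 by omega⟩ : Fin (n+1)) = Fin.succ ⟨j, h⟩ := rfl
      rw [he, Fin.cons_succ]
    · rw [dif_neg (by omega), dif_neg h]

lemma fin_split_mat (w : ℕ → ℝ≥0∞) (m : ℕ) : ∀ (n : ℕ) (H : (ℕ → ℕ → ℕ) → ℝ≥0∞),
    ∑' Om : Fin n → Fin m → ℕ, (∏ j, ∏ i, w (Om j i)) * H (extM m n Om) = EEmat w m n H := by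
  intro n
  induction n with
  | zero =>
    intro H
    have huniq : ∀ B : Fin 0 → Fin m → ℕ, B = (fun i => i.elim0) := fun B => funext fun i => i.elim0
    rw [tsum_eq_single (fun i : Fin 0 => i.elim0) (fun b hb => absurd (huniq b) hb)]
    rw [extM_zero]
    simp
  | succ n ih =>
    intro H
    rw [← Equiv.tsum_eq (Fin.consEquiv (fun _ : Fin (n+1) => Fin m → ℕ)), ENNReal.tsum_prod',
      EEmat_succ, ← fin_split w m (fun rowf => EEmat w m n (fun Omf => H (ncons rowf Omf)))]
    refine tsum_congr fun row => ?_
    calc (∑' Om' : Fin n → Fin m → ℕ,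
            (∏ j, ∏ i, w (((Fin.consEquiv (fun _ : Fin (n+1) => Fin m → ℕ)) (row, Om')) j i))
            * H (extM m (n+1) ((Fin.consEquiv (fun _ : Fin (n+1) => Fin m → ℕ)) (row, Om'))))
        = ∑' Om' : Fin n → Fin m → ℕ, (∏ i, w (row i)) *
            ((∏ j, ∏ i, w (Om' j i)) * H (ncons (extV row) (extM m n Om'))) := by
          refine tsum_congr fun Om' => ?_
          have he : (Fin.consEquiv (fun _ : Fin (n+1) => Fin m → ℕ)) (row, Om') = Fin.cons row Om' := rfl
          rw [he, extM_cons, Fin.prod_univ_succ]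
          simp only [Fin.cons_zero, Fin.cons_succ]
          ring
      _ = (∏ i, w (row i)) * EEmat w m n (fun Omf => H (ncons (extV row) Omf)) := by
          rw [ENNReal.tsum_mul_left, ih (fun Omf => H (ncons (extV row) Omf))]

end EJS

namespace EJS
open MeasureTheory ProbabilityTheory

section Final
variable (m n : ℕ) {q r lam : ℝ}
variable {P : Measure (Site → ℝ)} [IsProbabilityMeasure P]

lemma lintegral_bound
    (hindep : iIndepFun (m := fun _ : HBdSites => (inferInstance : MeasurableSpace ℝ))
      (fun v (ω : Site → ℝ) => ω v.val) P)
    (hbulk : ∀ i j : ℤ, 1 ≤ i → 1 ≤ j → P.map (fun ω => ω (i, j)) = geomMeasure r)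
    (hI : ∀ i : ℤ, 1 ≤ i → P.map (fun ω => ω (i, 0)) = geomMeasure q)
    (hm : 1 ≤ m) (hn : 1 ≤ n)
    (hr0 : 0 < r) (hrq : r ≤ q) (hq1 : q < 1) (hlam : 1 ≤ lam)
    {s : ℝ} (hqs : q ≤ s) (hrs : r < s) (hsl : s * lam < 1) :
    ∫⁻ ω, ENNReal.ofReal (Real.exp (Real.log lam * Gq10 ω (m:ℤ) (n:ℤ))) ∂P
      ≤ ENNReal.ofReal (((1-s)/(1-lam*s))^m * ((1 - r/(lam*s))/(1 - r/s))^n) := by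
  have hl0 : (0:ℝ) < lam := lt_of_lt_of_le one_pos hlam
  set F : (Site → ℝ) → ℝ≥0∞ :=
    fun ω => ENNReal.ofReal (Real.exp (Real.log lam * Gq10 ω (m:ℤ) (n:ℤ))) with hFdef
  have hF : ∀ (ω ω' : Site → ℝ),
      (∀ u : IdxT m n, ω (sigmaSite m n u) = ω' (sigmaSite m n u)) → F ω = F ω' := by
    intro ω ω' h
    rw [hFdef]
    simp only
    rw [Gq10_congr m n h]
  rw [bridge m n hindep hbulk hI F hF]
  have hpoint : ∀ d : DT m n, F (wpt m n d)
      ≤ (ENNReal.ofReal lam) ^ (bG (fun _ => 0) (extV d.1) (extM m n d.2) m n) := by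
    intro d
    set N := bG (fun _ => 0) (extV d.1) (extM m n d.2) m n with hN
    have h1 : Gq10 (wpt m n d) (m:ℤ) (n:ℤ) ≤ ((N:ℕ):ℝ) := Gq10_le_bG m n hm hn d
    have h2 : Real.exp (Real.log lam * Gq10 (wpt m n d) (m:ℤ) (n:ℤ))
        ≤ Real.exp (Real.log lam * ((N:ℕ):ℝ)) := by
      apply Real.exp_le_exp.2
      exact mul_le_mul_of_nonneg_left h1 (Real.log_nonneg hlam)
    have h3 : Real.exp (Real.log lam * ((N:ℕ):ℝ)) = lam ^ N := by
      rw [mul_comm, Real.exp_nat_mul, Real.exp_log hl0]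
    calc F (wpt m n d) ≤ ENNReal.ofReal (lam ^ N) := by
          rw [hFdef]
          exact ENNReal.ofReal_le_ofReal (h3 ▸ h2)
      _ = (ENNReal.ofReal lam) ^ N := ENNReal.ofReal_pow hl0.le N
  calc (∑' d : DT m n, ((∏ i, gw q (d.1 i)) * ∏ j, ∏ i, gw r (d.2 j i)) * F (wpt m n d))
      ≤ ∑' d : DT m n, ((∏ i, gw q (d.1 i)) * ∏ j, ∏ i, gw r (d.2 j i)) *
          (ENNReal.ofReal lam) ^ (bG (fun _ => 0) (extV d.1) (extM m n d.2) m n) :=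
        ENNReal.tsum_le_tsum fun d => mul_le_mul_right (hpoint d) _
    _ = ∑' B : Fin m → ℕ, (∏ i, gw q (B i)) * ∑' Om : Fin n → Fin m → ℕ,
          (∏ j, ∏ i, gw r (Om j i)) *
          (ENNReal.ofReal lam) ^ (bG (fun _ => 0) (extV B) (extM m n Om) m n) := by
        rw [ENNReal.tsum_prod']
        refine tsum_congr fun B => ?_
        rw [← ENNReal.tsum_mul_left]
        refine tsum_congr fun Om => ?_
        ring
    _ = EE (gw q) m (fun Bf => EEmat (gw r) m n (fun Omf =>
          (ENNReal.ofReal lam) ^ (bG (fun _ => 0) Bf Omf m n))) := by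
        rw [← fin_split (gw q) m (fun Bf => EEmat (gw r) m n (fun Omf =>
          (ENNReal.ofReal lam) ^ (bG (fun _ => 0) Bf Omf m n)))]
        refine tsum_congr fun B => ?_
        congr 1
        exact fin_split_mat (gw r) m n
          (fun Omf => (ENNReal.ofReal lam) ^ (bG (fun _ => 0) (extV B) Omf m n))
    _ ≤ _ := core_bound hr0 hrq hq1 hqs hrs hlam hsl m n

lemma aesm
    (hbulk : ∀ i j : ℤ, 1 ≤ i → 1 ≤ j → P.map (fun ω => ω (i, j)) = geomMeasure r)
    (hI : ∀ i : ℤ, 1 ≤ i → P.map (fun ω => ω (i, 0)) = geomMeasure q) :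
    AEStronglyMeasurable (fun ω => Real.exp (Real.log lam * Gq10 ω (m:ℤ) (n:ℤ))) P := by
  classical
  set f : (Site → ℝ) → ℝ := fun ω => Real.exp (Real.log lam * Gq10 ω (m:ℤ) (n:ℤ)) with hf
  set dOf : (Site → ℝ) → DT m n := fun ω =>
    (fun i => (⌊ω (sigmaSite m n (.inl i))⌋).toNat,
     fun j i => (⌊ω (sigmaSite m n (.inr (i, j)))⌋).toNat) with hdOf
  have hd1 : Measurable fun ω : Site → ℝ =>
      (fun i : Fin m => (⌊ω (sigmaSite m n (.inl i))⌋).toNat) :=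
    measurable_pi_lambda _ fun i =>
      (Measurable.of_discrete (f := Int.toNat)).comp
        ((measurable_pi_apply (sigmaSite m n (.inl i))).floor)
  have hd2 : Measurable fun ω : Site → ℝ =>
      (fun (j : Fin n) (i : Fin m) => (⌊ω (sigmaSite m n (.inr (i, j)))⌋).toNat) :=
    measurable_pi_lambda _ fun j => measurable_pi_lambda _ fun i =>
      (Measurable.of_discrete (f := Int.toNat)).comp
        ((measurable_pi_apply (sigmaSite m n (.inr (i, j)))).floor)
  have hdmeas : Measurable dOf := hd1.prodMk hd2
  set g : (Site → ℝ) → ℝ := fun ω => f (wpt m n (dOf ω)) with hg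
  have hgmeas : Measurable g :=
    (Measurable.of_discrete (f := fun d : DT m n => f (wpt m n d))).comp hdmeas
  refine ⟨g, hgmeas.stronglyMeasurable, ?_⟩
  have hae : ∀ ω ∈ (⋃ d : DT m n, atom m n d), f ω = g ω := by
    intro ω hω
    rcases Set.mem_iUnion.1 hω with ⟨d, hd⟩
    have h1 : ∀ u, ω (sigmaSite m n u) = ((valD m n d u : ℕ):ℝ) := fun u => Set.mem_iInter.1 hd u
    have h2 : dOf ω = d := by
      obtain ⟨d1, d2⟩ := d
      simp only [hdOf, Prod.mk.injEq]
      constructor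
      · funext i
        rw [h1 (.inl i)]
        simp [valD]
      · funext j i
        rw [h1 (.inr (i, j))]
        simp [valD]
    have h3 : Gq10 ω (m:ℤ) (n:ℤ) = Gq10 (wpt m n d) (m:ℤ) (n:ℤ) :=
      Gq10_congr m n (fun u => by rw [h1 u, wpt_sigma])
    rw [hg]
    simp only
    rw [h2, hf]
    simp only
    rw [h3]
  rw [Filter.eventuallyEq_iff_exists_mem]
  refine ⟨⋃ d : DT m n, atom m n d, ?_, hae⟩
  rw [mem_ae_iff]
  exact atoms_cover m n hbulk hI

end Final
end EJS

/-- **Upper bound on the restricted log moment generating function.**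
With i.i.d. Geom(r) bulk weights and independent i.i.d. Geom(q) horizontal boundary
weights, for `q ∈ [r,1)` and `λ ≥ 1`,
`log E[exp{log(λ) G^q(m,n|1,0)}] ≤ 𝓛^{λ,q}(m,n)`. -/
theorem restricted_logMGF_bound
    (r q : ℝ) (hr0 : 0 < r) (hr1 : r < 1) (hq : q ∈ Set.Ico r 1)
    (lam : ℝ) (hlam : 1 ≤ lam)
    (P : Measure (Site → ℝ)) [IsProbabilityMeasure P]
    (hindep : iIndepFun (m := fun _ : HBdSites => (inferInstance : MeasurableSpace ℝ))
      (fun v (ω : Site → ℝ) => ω v.val) P)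
    (hbulk : ∀ i j : ℤ, 1 ≤ i → 1 ≤ j → P.map (fun ω => ω (i, j)) = geomMeasure r)
    (hI : ∀ i : ℤ, 1 ≤ i → P.map (fun ω => ω (i, 0)) = geomMeasure q)
    (m n : ℕ) (hm : 1 ≤ m) (hn : 1 ≤ n) :
    (Real.log (∫ ω, Real.exp (Real.log lam * Gq10 ω (m : ℤ) (n : ℤ)) ∂P) : EReal)
      ≤ calL r q lam (m : ℝ) (n : ℝ) := by
  have hq0 : 0 < q := lt_of_lt_of_le hr0 hq.1
  have hl0 : (0:ℝ) < lam := lt_of_lt_of_le one_pos hlam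
  by_cases hlt : lam < 1 / q
  swap
  · rw [calL, if_neg hlt]; exact le_top
  rw [calL, if_pos hlt]
  have hq1 : q < 1 := hq.2
  have hql : q < 1 / lam := by
    rw [lt_div_iff₀ hl0]
    have h1 : lam * q < 1 := by
      have := (lt_div_iff₀ hq0).1 hlt
      linarith
    nlinarith
  have hne : (Set.Ioo q (1/lam)).Nonempty := Set.nonempty_Ioo.2 hql
  have hfacts : ∀ s ∈ Set.Ioo q (1/lam),
      q ≤ s ∧ r < s ∧ s * lam < 1 ∧ (1:ℝ) ≤ (1-s)/(1-lam*s) ∧ (1:ℝ) ≤ (1 - r/(lam*s))/(1 - r/s) := by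
    intro s hs
    obtain ⟨hs1, hs2⟩ := hs
    have hqs : q ≤ s := hs1.le
    have hrs : r < s := lt_of_le_of_lt hq.1 hs1
    have hsl : s * lam < 1 := (lt_div_iff₀ hl0).1 hs2
    have hs0 : 0 < s := lt_trans hq0 hs1
    have hlams : s ≤ lam * s := le_mul_of_one_le_left hs0.le hlam
    have hA : (1:ℝ) ≤ (1-s)/(1-lam*s) := by
      rw [le_div_iff₀ (by nlinarith : (0:ℝ) < 1 - lam*s)]
      nlinarith
    have hB : (1:ℝ) ≤ (1 - r/(lam*s))/(1 - r/s) := by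
      have h1 : 0 < 1 - r/s := by
        rw [sub_pos, div_lt_one hs0]; exact hrs
      rw [le_div_iff₀ h1]
      have h2 : r/(lam*s) ≤ r/s := div_le_div_of_nonneg_left hr0.le hs0 hlams
      nlinarith
    exact ⟨hqs, hrs, hsl, hA, hB⟩
  have hexp : ∀ s ∈ Set.Ioo q (1/lam),
      Real.exp (Lfun r s (lam * s) (m:ℝ) (n:ℝ))
        = ((1-s)/(1-lam*s))^m * ((1 - r/(lam*s))/(1 - r/s))^n := by
    intro s hs
    obtain ⟨hqs, hrs, hsl, hA, hB⟩ := hfacts s hs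
    rw [Lfun, Real.exp_add, Real.exp_nat_mul, Real.exp_nat_mul,
      Real.exp_log (by linarith), Real.exp_log (by linarith)]
  set f : (Site → ℝ) → ℝ := fun ω => Real.exp (Real.log lam * Gq10 ω (m:ℤ) (n:ℤ)) with hfdef
  have hmeas : AEStronglyMeasurable f P := EJS.aesm m n hbulk hI
  have hbnd : ∀ s ∈ Set.Ioo q (1/lam),
      ∫⁻ ω, ENNReal.ofReal (f ω) ∂P
        ≤ ENNReal.ofReal (((1-s)/(1-lam*s))^m * ((1 - r/(lam*s))/(1 - r/s))^n) := by
    intro s hs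
    obtain ⟨hqs, hrs, hsl, -, -⟩ := hfacts s hs
    exact EJS.lintegral_bound m n hindep hbulk hI hm hn hr0 hq.1 hq1 hlam hqs hrs hsl
  have hneI : ((fun s => Lfun r s (lam * s) (m:ℝ) (n:ℝ)) '' Set.Ioo q (1 / lam)).Nonempty :=
    hne.image _
  obtain ⟨s₀, hs₀⟩ := hne
  have hfin : ∫⁻ ω, ENNReal.ofReal (f ω) ∂P < ⊤ :=
    lt_of_le_of_lt (hbnd s₀ hs₀) ENNReal.ofReal_lt_top
  have hint : Integrable f P := by
    refine ⟨hmeas, ?_⟩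
    rw [hasFiniteIntegral_iff_norm]
    have heq : (∫⁻ ω, ENNReal.ofReal ‖f ω‖ ∂P) = ∫⁻ ω, ENNReal.ofReal (f ω) ∂P :=
      lintegral_congr fun ω => by rw [Real.norm_eq_abs, abs_of_nonneg (Real.exp_pos _).le]
    rw [heq]
    exact hfin
  have hIeq : ∫ ω, f ω ∂P = (∫⁻ ω, ENNReal.ofReal (f ω) ∂P).toReal :=
    integral_eq_lintegral_of_nonneg_ae
      (Filter.Eventually.of_forall fun ω => (Real.exp_pos _).le) hmeas
  have hlog : ∀ s ∈ Set.Ioo q (1/lam),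
      Real.log (∫ ω, f ω ∂P) ≤ Lfun r s (lam * s) (m:ℝ) (n:ℝ) := by
    intro s hs
    obtain ⟨hqs, hrs, hsl, hA, hB⟩ := hfacts s hs
    have hEe : (0:ℝ) ≤ ((1-s)/(1-lam*s))^m * ((1 - r/(lam*s))/(1 - r/s))^n := by
      have h1 : (0:ℝ) ≤ (1-s)/(1-lam*s) := by linarith
      have h2 : (0:ℝ) ≤ (1 - r/(lam*s))/(1 - r/s) := by linarith
      positivity
    have h1 : ∫ ω, f ω ∂P ≤ ((1-s)/(1-lam*s))^m * ((1 - r/(lam*s))/(1 - r/s))^n := by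
      rw [hIeq]
      exact ENNReal.toReal_le_of_le_ofReal hEe (hbnd s hs)
    have hL0 : 0 ≤ Lfun r s (lam*s) (m:ℝ) (n:ℝ) := by
      rw [Lfun]
      exact add_nonneg (mul_nonneg (Nat.cast_nonneg m) (Real.log_nonneg hA))
        (mul_nonneg (Nat.cast_nonneg n) (Real.log_nonneg hB))
    rcases lt_or_ge 0 (∫ ω, f ω ∂P) with hpos | hnonpos
    · calc Real.log (∫ ω, f ω ∂P)
          ≤ Real.log (((1-s)/(1-lam*s))^m * ((1 - r/(lam*s))/(1 - r/s))^n) :=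
            Real.log_le_log hpos h1
        _ = Real.log (Real.exp (Lfun r s (lam*s) (m:ℝ) (n:ℝ))) := by rw [hexp s hs]
        _ = _ := Real.log_exp _
    · have hz : ∫ ω, f ω ∂P = 0 :=
        le_antisymm hnonpos (integral_nonneg fun ω => (Real.exp_pos _).le)
      rw [hz, Real.log_zero]
      exact hL0
  have hsInf : Real.log (∫ ω, f ω ∂P)
      ≤ sInf ((fun s => Lfun r s (lam * s) (m:ℝ) (n:ℝ)) '' Set.Ioo q (1 / lam)) := by
    refine le_csInf hneI ?_
    rintro b ⟨s, hs, rfl⟩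
    exact hlog s hs
  exact EReal.coe_le_coe_iff.2 hsInf

end
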